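/- arXiv:1803.04063 — 5 statements merged into one kernel-verified Lean document; each statement's English description precedes it below -/
import Mathlib

section
/- For a tower of finite field extensions K ⊆ L ⊆ M over a base field k of characteristic 0, the resolvent degree satisfies RD(M/K) = max(RD(M/L), RD(L/K)). -/
noncomputable section
noncomputable section

variable (k : Type) [Field k]

/-- `TrdegLE k F d` : the transcendence degree of `F` over `k` is at most `d`,
i.e. there is a finite subset of `F` of cardinality at most `d` over which `F` is algebraic. -/
def TrdegLE (F : Type) [Field F] [Algebra k F] (d : ℕ) : Prop :=
  ∃ s : Finset F, s.card ≤ d ∧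
    Algebra.IsAlgebraic (IntermediateField.adjoin k (s : Set F)) F

/-- One step of a resolvent tower inside an ambient field `Ω`: `E' = E ⊗_F F̃` for some
subfield `F ⊆ E` of transcendence degree at most `d` over `k` and some finite extension
`F̃/F` (realized inside `Ω`, so that `E' = E ⊔ F̃` with `[E' : E] = [F̃ : F]`). -/
def RDStep (Ω : Type) [Field Ω] [Algebra k Ω] (d : ℕ)
    (E E' : IntermediateField k Ω) : Prop :=
  ∃ (F Ft : IntermediateField k Ω) (_hFE : F ≤ E) (hFFt : F ≤ Ft),
    TrdegLE k F d ∧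
    (letI : Algebra F Ft := (IntermediateField.inclusion hFFt).toRingHom.toAlgebra
     letI : Module F Ft := Algebra.toModule
     FiniteDimensional F Ft) ∧
    E' = E ⊔ Ft ∧
    (letI : Algebra F Ft := (IntermediateField.inclusion hFFt).toRingHom.toAlgebra
     letI : Module F Ft := Algebra.toModule
     letI : Algebra E (E ⊔ Ft : IntermediateField k Ω) :=
       (IntermediateField.inclusion le_sup_left).toRingHom.toAlgebra
     letI : Module E (E ⊔ Ft : IntermediateField k Ω) := Algebra.toModule
     Module.finrank F Ft = Module.finrank E (E ⊔ Ft : IntermediateField k Ω))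

variable (K L : Type) [Field K] [Field L] [Algebra k K] [Algebra k L]

/-- `RDLE k K L d` : the resolvent degree of `L/K` over `k` is at most `d`, i.e. there is a
finite tower `K = L₀ ⊆ L₁ ⊆ ⋯ ⊆ L_r` of finite extensions (inside an algebraic closure of
`K`), each stage being a base change `L_i = L_{i-1} ⊗_{F_i} F̃_i` along a finite extension
of a subfield `F_i ⊆ L_{i-1}` of transcendence degree at most `d` over `k`, together with a
`K`-embedding of `L` into `L_r`. -/
def RDLE [Algebra K L] [IsScalarTower k K L] (d : ℕ) : Prop :=
  ∃ (r : ℕ) (E : Fin (r + 1) → IntermediateField k (AlgebraicClosure K)),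
    E 0 = (IsScalarTower.toAlgHom k K (AlgebraicClosure K)).fieldRange ∧
    (∀ i : Fin r, RDStep k (AlgebraicClosure K) d (E i.castSucc) (E i.succ)) ∧
    ∃ f : L →ₐ[k] AlgebraicClosure K,
      f.fieldRange ≤ E (Fin.last r) ∧
      ∀ x : K, f (algebraMap K L x) = algebraMap K (AlgebraicClosure K) x

/-- The resolvent degree `RD_k(L/K)` of a field extension `L/K` over `k`. -/
def RD [Algebra K L] [IsScalarTower k K L] : ℕ := sInf {d | RDLE k K L d}


namespace RDHelp
open IntermediateField Polynomial

variable {k : Type} [Field k]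
variable {Ω : Type} [Field Ω] [Algebra k Ω]
variable {Ω' : Type} [Field Ω'] [Algebra k Ω']

theorem int_map (φ : Ω →ₐ[k] Ω') (A : IntermediateField k Ω) {x : Ω}
    (hx : IsIntegral A x) : IsIntegral ((A.map φ) : IntermediateField k Ω') (φ x) := by
  obtain ⟨p, hm, h0⟩ := hx
  refine ⟨p.map (A.equivMap φ : ↥A →+* ↥(A.map φ)), hm.map _, ?_⟩
  have h2 : eval₂ (algebraMap ↥(A.map φ) Ω') (φ x)
      (p.map (A.equivMap φ : ↥A →+* ↥(A.map φ)))
      = eval₂ ((algebraMap ↥(A.map φ) Ω').comp (A.equivMap φ : ↥A →+* ↥(A.map φ))) (φ x) p :=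
    eval₂_map _ _ _
  have hc : (algebraMap ↥(A.map φ) Ω').comp ((A.equivMap φ : ↥A →+* ↥(A.map φ)))
      = (φ : Ω →+* Ω').comp (algebraMap ↥A Ω) := by
    ext a; exact A.coe_equivMap_apply φ a
  have h1 : (φ : Ω →+* Ω') (eval₂ (algebraMap ↥A Ω) x p)
      = eval₂ ((φ : Ω →+* Ω').comp (algebraMap ↥A Ω)) (φ x) p :=
    Polynomial.hom_eval₂ _ _ _ _
  rw [h2, hc, ← h1, h0, map_zero]

theorem int_comap (φ : Ω →ₐ[k] Ω') (A : IntermediateField k Ω) {x : Ω}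
    (hx : IsIntegral ((A.map φ) : IntermediateField k Ω') (φ x)) : IsIntegral A x := by
  obtain ⟨p, hm, h0⟩ := hx
  refine ⟨p.map ((A.equivMap φ).symm : ↥(A.map φ) →+* ↥A), hm.map _, ?_⟩
  apply φ.injective
  have h2 : eval₂ (algebraMap ↥A Ω) x (p.map ((A.equivMap φ).symm : ↥(A.map φ) →+* ↥A))
      = eval₂ ((algebraMap ↥A Ω).comp ((A.equivMap φ).symm : ↥(A.map φ) →+* ↥A)) x p :=
    eval₂_map _ _ _
  have h1 : (φ : Ω →+* Ω') (eval₂ ((algebraMap ↥A Ω).comp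
        ((A.equivMap φ).symm : ↥(A.map φ) →+* ↥A)) x p)
      = eval₂ ((φ : Ω →+* Ω').comp ((algebraMap ↥A Ω).comp
        ((A.equivMap φ).symm : ↥(A.map φ) →+* ↥A))) (φ x) p :=
    Polynomial.hom_eval₂ _ _ _ _
  have hc : (φ : Ω →+* Ω').comp ((algebraMap ↥A Ω).comp
        ((A.equivMap φ).symm : ↥(A.map φ) →+* ↥A)) = algebraMap ↥(A.map φ) Ω' := by
    ext a
    have h3 := A.coe_equivMap_apply φ ((A.equivMap φ).symm a)
    rw [AlgEquiv.apply_symm_apply] at h3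
    exact h3.symm
  show (φ : Ω →+* Ω') _ = (φ : Ω →+* Ω') 0
  rw [h2, h1, hc, map_zero]
  exact h0

theorem int_mono {A B : IntermediateField k Ω} (hAB : A ≤ B) {x : Ω}
    (hx : IsIntegral A x) : IsIntegral B x := by
  obtain ⟨p, hm, h0⟩ := hx
  refine ⟨p.map (inclusion hAB : ↥A →+* ↥B), hm.map _, ?_⟩
  have h2 : eval₂ (algebraMap ↥B Ω) x (p.map (inclusion hAB : ↥A →+* ↥B))
      = eval₂ ((algebraMap ↥B Ω).comp (inclusion hAB : ↥A →+* ↥B)) x p := eval₂_map _ _ _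
  have hc : (algebraMap ↥B Ω).comp (inclusion hAB : ↥A →+* ↥B) = algebraMap ↥A Ω := by
    ext a; rfl
  rw [h2, hc, h0]

theorem mem_int {A : IntermediateField k Ω} {x : Ω} (hx : x ∈ A) : IsIntegral A x := by
  have : x = algebraMap ↥A Ω ⟨x, hx⟩ := rfl
  rw [this]
  exact isIntegral_algebraMap

theorem int_tower {A B : IntermediateField k Ω} (hAB : A ≤ B)
    (hB : ∀ b ∈ B, IsIntegral A b) {x : Ω} (hx : IsIntegral B x) : IsIntegral A x := by
  letI : Algebra ↥A ↥B := (inclusion hAB).toRingHom.toAlgebra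
  haveI : IsScalarTower ↥A ↥B Ω := IsScalarTower.of_algebraMap_eq fun a => rfl
  haveI : Algebra.IsIntegral ↥A ↥B := by
    constructor
    intro b
    obtain ⟨p, hm, h0⟩ := hB b.1 b.2
    refine ⟨p, hm, ?_⟩
    have h2 : (B.val : ↥B →+* Ω) (eval₂ (algebraMap ↥A ↥B) b p)
        = eval₂ ((B.val : ↥B →+* Ω).comp (algebraMap ↥A ↥B)) ((B.val : ↥B →+* Ω) b) p :=
      Polynomial.hom_eval₂ _ _ _ _
    have hc : (B.val : ↥B →+* Ω).comp (algebraMap ↥A ↥B) = algebraMap ↥A Ω := by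
      ext a; rfl
    rw [hc] at h2
    apply Subtype.val_injective
    show (B.val : ↥B →+* Ω) _ = _
    rw [h2]
    exact h0
  exact isIntegral_trans x hx


/-- `Ω`-level version of `TrdegLE`. -/
def Good (F : IntermediateField k Ω) (d : ℕ) : Prop :=
  ∃ t : Finset Ω, ↑t ⊆ (F : Set Ω) ∧ t.card ≤ d ∧
    ∀ x ∈ F, IsIntegral (adjoin k (↑t : Set Ω)) x

theorem good_mono {F : IntermediateField k Ω} {d d' : ℕ} (h : d ≤ d')
    (hg : Good F d) : Good F d' := by
  obtain ⟨t, h1, h2, h3⟩ := hg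
  exact ⟨t, h1, h2.trans h, h3⟩

theorem good_map (φ : Ω →ₐ[k] Ω') {F : IntermediateField k Ω} {d : ℕ}
    (hg : Good F d) : Good (F.map φ) d := by
  classical
  obtain ⟨t, h1, h2, h3⟩ := hg
  refine ⟨t.image φ, ?_, (Finset.card_image_le).trans h2, ?_⟩
  · intro x hx
    simp only [Finset.coe_image, Set.mem_image, Finset.mem_coe] at hx
    obtain ⟨y, hy, rfl⟩ := hx
    exact ⟨y, h1 hy, rfl⟩
  · rintro x ⟨y, hy, rfl⟩
    have hh := int_map φ _ (h3 y hy)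
    have he : (adjoin k (↑t : Set Ω)).map φ = adjoin k (↑(t.image φ) : Set Ω') := by
      rw [adjoin_map]
      congr 1
      simp [Finset.coe_image]
    rwa [he] at hh

theorem good_sup_int {F F₁ : IntermediateField k Ω} {d : ℕ} (hg : Good F d)
    (hle : F ≤ F₁) (hint : ∀ x ∈ F₁, IsIntegral F x) : Good F₁ d := by
  obtain ⟨t, h1, h2, h3⟩ := hg
  refine ⟨t, fun x hx => hle (h1 hx), h2, fun x hx => ?_⟩
  exact int_tower (adjoin_le_iff.2 h1) h3 (hint x hx)

theorem trdegLE_iff_good (F : IntermediateField k Ω) (d : ℕ) :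
    TrdegLE k ↥F d ↔ Good F d := by
  classical
  constructor
  · rintro ⟨s, hcard, halg⟩
    refine ⟨s.image (fun a => a.1), ?_, Finset.card_image_le.trans hcard, ?_⟩
    · intro x hx
      simp only [Finset.coe_image, Set.mem_image, Finset.mem_coe] at hx
      obtain ⟨y, _, rfl⟩ := hx
      exact y.2
    · intro x hx
      obtain ⟨halg⟩ := halg
      have h1 : IsIntegral (↥(adjoin k (↑s : Set ↥F))) (⟨x, hx⟩ : ↥F) :=
        (halg ⟨x, hx⟩).isIntegral
      have h2 := int_map F.val (adjoin k (↑s : Set ↥F)) h1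
      have he : (adjoin k (↑s : Set ↥F)).map F.val
          = adjoin k (↑(s.image (fun a => a.1)) : Set Ω) := by
        rw [adjoin_map]
        congr 1
        simp only [Finset.coe_image]
        rfl
      rwa [he] at h2
  · rintro ⟨t, htF, hcard, hint⟩
    refine ⟨t.attach.image (fun x => (⟨x.1, htF x.2⟩ : ↥F)),
      (Finset.card_image_le.trans (by simp)).trans hcard, ?_⟩
    constructor
    intro x
    apply IsIntegral.isAlgebraic
    apply int_comap F.val
    have he : (adjoin k (↑(t.attach.image (fun x => (⟨x.1, htF x.2⟩ : ↥F))) : Set ↥F)).map F.val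
        = adjoin k (↑t : Set Ω) := by
      rw [adjoin_map]
      congr 1
      ext z
      simp only [Finset.coe_image, Set.mem_image, Finset.mem_coe, Finset.mem_attach]
      constructor
      · rintro ⟨y, ⟨w, -, rfl⟩, rfl⟩
        exact w.2
      · intro hz
        exact ⟨⟨z, htF hz⟩, ⟨⟨z, hz⟩, by simp, rfl⟩, rfl⟩
    rw [he]
    exact hint x.1 x.2

theorem finrank_eq_adjoin {F S : IntermediateField k Ω} (hFS : F ≤ S) {α : Ω}
    (hint : IsIntegral (↥F) α) (hS : S = F ⊔ adjoin k {α}) :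
    letI : Algebra ↥F ↥S := (inclusion hFS).toRingHom.toAlgebra
    letI : Module ↥F ↥S := Algebra.toModule
    FiniteDimensional ↥F ↥S ∧ Module.finrank ↥F ↥S = (minpoly (↥F) α).natDegree := by
  letI : Algebra ↥F ↥S := (inclusion hFS).toRingHom.toAlgebra
  letI : Module ↥F ↥S := Algebra.toModule
  have hrs : restrictScalars k (adjoin ↥F ({α} : Set Ω)) = S := by
    rw [restrictScalars_adjoin_eq_sup, hS]
  have hmem : ∀ x : Ω, x ∈ adjoin ↥F ({α} : Set Ω) ↔ x ∈ S := fun x => by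
    rw [← hrs]; exact (mem_restrictScalars k).symm
  let e : ↥(adjoin ↥F ({α} : Set Ω)) ≃ₗ[↥F] ↥S :=
    { toFun := fun x => ⟨x.1, (hmem x.1).1 x.2⟩
      invFun := fun y => ⟨y.1, (hmem y.1).2 y.2⟩
      map_add' := fun _ _ => rfl
      map_smul' := fun c x => rfl
      left_inv := fun x => rfl
      right_inv := fun y => rfl }
  haveI : FiniteDimensional ↥F ↥(adjoin ↥F ({α} : Set Ω)) := by
    apply adjoin.finiteDimensional hint
  constructor
  · exact Module.Finite.equiv e
  · rw [← LinearEquiv.finrank_eq e, adjoin.finrank hint]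

theorem coeff_multiset_prod_mem (R₀ : Subring Ω) (s : Multiset Ω) (h : ∀ r ∈ s, r ∈ R₀) :
    ∀ n, ((s.map fun a => X - C a).prod).coeff n ∈ R₀ := by
  induction s using Multiset.induction with
  | empty =>
    intro n
    simp only [Multiset.map_zero, Multiset.prod_zero, coeff_one]
    split_ifs
    · exact Subring.one_mem R₀
    · exact Subring.zero_mem R₀
  | cons a s ih =>
    intro n
    rw [Multiset.map_cons, Multiset.prod_cons, coeff_mul]
    apply Subring.sum_mem
    rintro ⟨i, j⟩ -
    apply Subring.mul_mem
    · have ha : a ∈ R₀ := h a (Multiset.mem_cons_self a s)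
      rw [coeff_sub]
      apply Subring.sub_mem
      · rw [coeff_X]
        split_ifs
        · exact Subring.one_mem R₀
        · exact Subring.zero_mem R₀
      · rw [coeff_C]
        split_ifs
        · exact ha
        · exact Subring.zero_mem R₀
    · exact ih (fun r hr => h r (Multiset.mem_cons_of_mem hr)) j

theorem exists_monic_lift {A : IntermediateField k Ω} {q : Polynomial Ω} (hm : q.Monic)
    (hc : ∀ n, q.coeff n ∈ A) :
    ∃ p : Polynomial ↥A, p.Monic ∧ p.map (algebraMap ↥A Ω) = q ∧ p.degree = q.degree := by
  have hl : q ∈ lifts (algebraMap ↥A Ω) := by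
    rw [lifts_iff_coeff_lifts]
    intro n; exact ⟨⟨q.coeff n, hc n⟩, rfl⟩
  obtain ⟨p, h1, h2, h3⟩ := lifts_and_degree_eq_and_monic hl hm
  exact ⟨p, h3, h1, h2⟩

theorem int_of_coeff_mem {A : IntermediateField k Ω} {q : Polynomial Ω} (hm : q.Monic)
    (hc : ∀ n, q.coeff n ∈ A) {x : Ω} (h0 : q.eval x = 0) : IsIntegral (↥A) x := by
  obtain ⟨p, hpm, hpq, -⟩ := exists_monic_lift hm hc
  exact ⟨p, hpm, by rw [← eval_map, hpq]; exact h0⟩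

theorem rdStep_adjoin [IsAlgClosed Ω] {d : ℕ} {E₁ F₂ : IntermediateField k Ω}
    (hFE : F₂ ≤ E₁) (hgood : Good F₂ d) {α : Ω} (hα : IsIntegral (↥F₂) α) :
    RDStep k Ω d E₁ (E₁ ⊔ adjoin k ({α} : Set Ω)) := by
  have hαE : IsIntegral (↥E₁) α := int_mono hFE hα
  set p := minpoly (↥E₁) α with hp
  set q := p.map (algebraMap ↥E₁ Ω) with hq
  have hqm : q.Monic := (minpoly.monic hαE).map _
  have hq0 : q.eval α = 0 := by
    rw [hq, eval_map]
    exact minpoly.aeval _ _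
  -- coefficients of q are integral over F₂
  have hCint : ∀ n, IsIntegral (↥F₂) (q.coeff n) := by
    have hdvd : q ∣ (minpoly ↥F₂ α).map (algebraMap ↥F₂ Ω) := by
      have h1 : p ∣ (minpoly ↥F₂ α).map ((inclusion hFE) : ↥F₂ →+* ↥E₁) := by
        apply minpoly.dvd
        rw [Polynomial.aeval_def, eval₂_map]
        have h4 : (algebraMap ↥E₁ Ω).comp ((inclusion hFE) : ↥F₂ →+* ↥E₁)
            = algebraMap ↥F₂ Ω := by ext a; rfl
        rw [h4, ← Polynomial.aeval_def, minpoly.aeval]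
      have h3 := Polynomial.map_dvd (algebraMap ↥E₁ Ω) h1
      rw [Polynomial.map_map] at h3
      have h4 : (algebraMap ↥E₁ Ω).comp ((inclusion hFE) : ↥F₂ →+* ↥E₁)
          = algebraMap ↥F₂ Ω := by ext a; rfl
      rwa [h4] at h3
    intro n
    have hsplit : q = (q.roots.map fun a => X - C a).prod :=
      (IsAlgClosed.splits q).eq_prod_roots_of_monic hqm
    have hroots : ∀ r ∈ q.roots, r ∈ (integralClosure ↥F₂ Ω).toSubring := by
      intro r hr
      have hq0r : q.eval r = 0 := by
        have := isRoot_of_mem_roots hr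
        exact this
      obtain ⟨c, hc⟩ := hdvd
      have hmr : ((minpoly ↥F₂ α).map (algebraMap ↥F₂ Ω)).eval r = 0 := by
        rw [hc, eval_mul, hq0r, zero_mul]
      show IsIntegral (↥F₂) r
      exact ⟨minpoly ↥F₂ α, minpoly.monic hα, by rw [← eval_map]; exact hmr⟩
    have := coeff_multiset_prod_mem (integralClosure ↥F₂ Ω).toSubring q.roots hroots n
    rw [← hsplit] at this
    exact this
  set C : Set Ω := Set.range q.coeff with hC
  have hCE : C ⊆ (E₁ : Set Ω) := by
    rintro x ⟨n, rfl⟩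
    rw [hq, coeff_map]
    exact (p.coeff n).2
  set F₁ : IntermediateField k Ω := F₂ ⊔ adjoin k C with hF₁
  have hF₂F₁ : F₂ ≤ F₁ := le_sup_left
  have hF₁E : F₁ ≤ E₁ := sup_le hFE (adjoin_le_iff.2 hCE)
  have hF₁int : ∀ x ∈ F₁, IsIntegral (↥F₂) x := by
    have h1 : restrictScalars k (adjoin ↥F₂ C) = F₁ := by
      rw [restrictScalars_adjoin_eq_sup]
    intro x hx
    rw [← h1, mem_restrictScalars] at hx
    haveI halg : Algebra.IsAlgebraic ↥F₂ (adjoin ↥F₂ C) := by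
      apply isAlgebraic_adjoin
      rintro x ⟨n, rfl⟩
      exact hCint n
    obtain ⟨halg⟩ := halg
    have h2 : IsIntegral (↥F₂) (⟨x, hx⟩ : ↥(adjoin ↥F₂ C)) := (halg _).isIntegral
    have h3 := h2.map (adjoin ↥F₂ C).val
    exact h3
  have hαF₁ : IsIntegral (↥F₁) α := int_mono hF₂F₁ hα
  have hgood₁ : Good F₁ d := good_sup_int hgood hF₂F₁ hF₁int
  have hCF₁ : ∀ n, q.coeff n ∈ F₁ := fun n =>
    (le_sup_right : adjoin k C ≤ F₁) (subset_adjoin k C ⟨n, rfl⟩)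
  -- degree equality of the two minimal polynomials
  have hdeg : (minpoly (↥F₁) α).natDegree = p.natDegree := by
    apply natDegree_eq_of_degree_eq
    have hqdeg : q.degree = p.degree := degree_map _ _
    apply le_antisymm
    · obtain ⟨p₁, hm₁, hmap₁, hdeg₁⟩ := exists_monic_lift hqm hCF₁
      have h0₁ : Polynomial.aeval α p₁ = 0 := by
        rw [Polynomial.aeval_def, ← eval_map, hmap₁]
        exact hq0
      exact (minpoly.min _ _ hm₁ h0₁).trans (hdeg₁.trans hqdeg).le
    · have hm₂ : ((minpoly ↥F₁ α).map ((inclusion hF₁E) : ↥F₁ →+* ↥E₁)).Monic :=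
        (minpoly.monic hαF₁).map _
      have h0₂ : Polynomial.aeval α ((minpoly ↥F₁ α).map ((inclusion hF₁E) : ↥F₁ →+* ↥E₁)) = 0 := by
        rw [Polynomial.aeval_def, eval₂_map]
        have h4 : (algebraMap ↥E₁ Ω).comp ((inclusion hF₁E) : ↥F₁ →+* ↥E₁)
            = algebraMap ↥F₁ Ω := by ext a; rfl
        rw [h4, ← Polynomial.aeval_def, minpoly.aeval]
      have := minpoly.min (↥E₁) α hm₂ h0₂
      rw [degree_map] at this
      exact this
  set Ft₁ : IntermediateField k Ω := F₁ ⊔ adjoin k ({α} : Set Ω) with hFt₁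
  have hF₁Ft : F₁ ≤ Ft₁ := le_sup_left
  have hsup : E₁ ⊔ Ft₁ = E₁ ⊔ adjoin k ({α} : Set Ω) := by
    rw [hFt₁, ← sup_assoc, sup_eq_left.2 hF₁E]
  obtain ⟨hfin₁, hfr₁⟩ := finrank_eq_adjoin hF₁Ft hαF₁ hFt₁
  obtain ⟨hfinE, hfrE⟩ := finrank_eq_adjoin (le_sup_left : E₁ ≤ E₁ ⊔ Ft₁) hαE hsup
  refine ⟨F₁, Ft₁, hF₁E, hF₁Ft, (trdegLE_iff_good F₁ d).2 hgood₁, hfin₁, hsup.symm, ?_⟩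
  rw [hfr₁, hfrE, hdeg]

theorem rdStep_mono {d d' : ℕ} (h : d ≤ d') {E E' : IntermediateField k Ω}
    (hs : RDStep k Ω d E E') : RDStep k Ω d' E E' := by
  obtain ⟨F, Ft, hFE, hFFt, ⟨s, hc, ha⟩, rest⟩ := hs
  exact ⟨F, Ft, hFE, hFFt, ⟨s, hc.trans h, ha⟩, rest⟩

theorem step_decomp [CharZero k] {d : ℕ} {E E' : IntermediateField k Ω}
    (h : RDStep k Ω d E E') :
    ∃ (F : IntermediateField k Ω) (α : Ω), F ≤ E ∧ Good F d ∧ IsIntegral (↥F) α ∧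
      E' = E ⊔ adjoin k ({α} : Set Ω) := by
  obtain ⟨F, Ft, hFE, hFFt, htr, hfin, hE', -⟩ := h
  letI : Algebra ↥F ↥Ft := (inclusion hFFt).toRingHom.toAlgebra
  letI : Module ↥F ↥Ft := Algebra.toModule
  haveI hfin' : FiniteDimensional ↥F ↥Ft := hfin
  haveI : CharZero ↥F := charZero_of_injective_algebraMap (algebraMap k ↥F).injective
  haveI : Algebra.IsIntegral ↥F ↥Ft := Algebra.IsIntegral.of_finite _ _
  haveI : Algebra.IsSeparable ↥F ↥Ft := Algebra.IsSeparable.of_integral _ _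
  obtain ⟨γ, hγ⟩ := Field.exists_primitive_element ↥F ↥Ft
  refine ⟨F, (γ : Ω), hFE, (trdegLE_iff_good F d).1 htr, ?_, ?_⟩
  · have h1 : IsIntegral (↥F) γ := IsIntegral.of_finite _ _
    obtain ⟨pp, hm, h0⟩ := h1
    refine ⟨pp, hm, ?_⟩
    have h2 : (Ft.val : ↥Ft →+* Ω) (eval₂ (algebraMap ↥F ↥Ft) γ pp)
        = eval₂ ((Ft.val : ↥Ft →+* Ω).comp (algebraMap ↥F ↥Ft)) ((Ft.val : ↥Ft →+* Ω) γ) pp :=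
      Polynomial.hom_eval₂ _ _ _ _
    have hc : (Ft.val : ↥Ft →+* Ω).comp (algebraMap ↥F ↥Ft) = algebraMap ↥F Ω := by
      ext; rfl
    rw [hc] at h2
    show eval₂ (algebraMap ↥F Ω) ((Ft.val : ↥Ft →+* Ω) γ) pp = 0
    rw [← h2, h0, map_zero]
  · have hFt : Ft = F ⊔ adjoin k ({(γ : Ω)} : Set Ω) := by
      apply le_antisymm
      · intro x hx
        have hmem : x ∈ restrictScalars k (adjoin ↥F ({(γ : Ω)} : Set Ω)) := by
          rw [mem_restrictScalars]
          let v : ↥Ft →ₐ[↥F] Ω :=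
            { toRingHom := (Ft.val : ↥Ft →+* Ω), commutes' := fun c => rfl }
          have h5 : (⟨x, hx⟩ : ↥Ft) ∈ (⊤ : IntermediateField ↥F ↥Ft) := trivial
          rw [← hγ] at h5
          have h6 : v ⟨x, hx⟩ ∈ (IntermediateField.adjoin ↥F ({γ} : Set ↥Ft)).map v :=
            ⟨⟨x, hx⟩, h5, rfl⟩
          rw [adjoin_map] at h6
          simp at h6; exact h6
        rwa [restrictScalars_adjoin_eq_sup] at hmem
      · apply sup_le hFFt
        rw [adjoin_le_iff]
        intro y hy
        rw [Set.mem_singleton_iff] at hy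
        rw [hy]
        exact γ.2
    rw [hE']
    generalize (γ : Ω) = a at hFt ⊢
    rw [hFt, ← sup_assoc, sup_eq_left.2 hFE]

theorem rdStep_map_sup [CharZero k] [IsAlgClosed Ω'] (ι : Ω →ₐ[k] Ω')
    (B : IntermediateField k Ω') {d : ℕ} {E E' : IntermediateField k Ω}
    (h : RDStep k Ω d E E') :
    RDStep k Ω' d (B ⊔ E.map ι) (B ⊔ E'.map ι) := by
  obtain ⟨F, α, hFE, hgood, hα, hE'⟩ := step_decomp h
  have h1 : F.map ι ≤ B ⊔ E.map ι := le_trans (map_mono ι hFE) le_sup_right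
  have h2 := rdStep_adjoin h1 (good_map ι hgood) (int_map ι F hα)
  have h3 : B ⊔ E'.map ι = (B ⊔ E.map ι) ⊔ adjoin k ({ι α} : Set Ω') := by
    rw [hE', IntermediateField.map_sup, adjoin_map, Set.image_singleton, sup_assoc]
  rwa [← h3] at h2

theorem int_range {K' : Type} [Field K'] [Algebra k K'] (g : K' →ₐ[k] Ω)
    {x : Ω} (hx : RingHom.IsIntegralElem (g : K' →+* Ω) x) :
    IsIntegral (↥g.fieldRange) x := by
  obtain ⟨p, hm, h0⟩ := hx
  let e : K' →+* ↥g.fieldRange :=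
    { toFun := fun c => ⟨g c, c, rfl⟩
      map_one' := by ext; simp
      map_mul' := fun a b => by ext; simp
      map_zero' := by ext; simp
      map_add' := fun a b => by ext; simp }
  refine ⟨p.map e, hm.map _, ?_⟩
  rw [eval₂_map]
  have hc : (algebraMap ↥g.fieldRange Ω).comp e = (g : K' →+* Ω) := by ext; rfl
  rw [hc]
  exact h0

end RDHelp

section RDTop
open IntermediateField Polynomial RDHelp

theorem rdle_mono {k K L : Type} [Field k] [Field K] [Field L] [Algebra k K] [Algebra k L]
    [Algebra K L] [IsScalarTower k K L] {d d' : ℕ} (h : d ≤ d') (hr : RDLE k K L d) :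
    RDLE k K L d' := by
  obtain ⟨r, E, h0, hstep, hf⟩ := hr
  exact ⟨r, E, h0, fun i => rdStep_mono h (hstep i), hf⟩

theorem rdle_exists (k K L : Type) [Field k] [CharZero k] [Field K] [Field L]
    [Algebra k K] [Algebra k L] [Algebra K L] [IsScalarTower k K L] [FiniteDimensional K L] :
    ∃ d, RDLE k K L d := by
  classical
  haveI : CharZero K := charZero_of_injective_algebraMap (algebraMap k K).injective
  haveI : Algebra.IsAlgebraic K L := Algebra.IsAlgebraic.of_finite K L
  obtain ⟨α₀, hα₀⟩ := Field.exists_primitive_element K L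
  let f₀ : L →ₐ[K] AlgebraicClosure K := IsAlgClosed.lift
  set β := f₀ α₀ with hβ
  set E₀ : IntermediateField k (AlgebraicClosure K) :=
    (IsScalarTower.toAlgHom k K (AlgebraicClosure K)).fieldRange with hE₀
  have hβE : IsIntegral (↥E₀) β := by
    apply int_range
    have h1 : IsIntegral K β := Algebra.IsIntegral.isIntegral β
    exact h1
  set p := minpoly (↥E₀) β with hp
  set q := p.map (algebraMap ↥E₀ (AlgebraicClosure K)) with hqdef
  have hqm : q.Monic := (minpoly.monic hβE).map _
  have hq0 : q.eval β = 0 := by rw [hqdef, eval_map]; exact minpoly.aeval _ _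
  set t : Finset (AlgebraicClosure K) :=
    (Finset.range (q.natDegree + 1)).image (fun n => q.coeff n) with ht
  have hcoeff : ∀ n, q.coeff n ∈ adjoin k (↑t : Set (AlgebraicClosure K)) := by
    intro n
    by_cases hn : n ≤ q.natDegree
    · apply subset_adjoin
      exact Finset.mem_coe.2 (Finset.mem_image.2 ⟨n, Finset.mem_range.2 (by omega), rfl⟩)
    · rw [coeff_eq_zero_of_natDegree_lt (by omega)]
      exact zero_mem _
  have htE : (↑t : Set (AlgebraicClosure K)) ⊆ (E₀ : Set (AlgebraicClosure K)) := by
    intro x hx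
    obtain ⟨n, -, rfl⟩ := Finset.mem_image.1 (Finset.mem_coe.1 hx)
    rw [hqdef, coeff_map]
    exact (p.coeff n).2
  have hgood : Good (adjoin k (↑t : Set (AlgebraicClosure K))) t.card :=
    ⟨t, subset_adjoin k _, le_refl _, fun x hx => mem_int hx⟩
  have hβF : IsIntegral (↥(adjoin k (↑t : Set (AlgebraicClosure K)))) β :=
    int_of_coeff_mem hqm hcoeff hq0
  have hstep := rdStep_adjoin (adjoin_le_iff.2 htE) hgood hβF
  refine ⟨t.card, 1, ![E₀, E₀ ⊔ adjoin k ({β} : Set (AlgebraicClosure K))], rfl, ?_, ?_⟩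
  · intro i
    fin_cases i
    exact hstep
  · refine ⟨f₀.restrictScalars k, ?_, fun x => f₀.commutes x⟩
    rintro x ⟨y, rfl⟩
    show f₀ y ∈ _
    have h5 : y ∈ (⊤ : IntermediateField K L) := trivial
    rw [← hα₀] at h5
    have h6 : f₀ y ∈ (IntermediateField.adjoin K ({α₀} : Set L)).map f₀ := ⟨y, h5, rfl⟩
    rw [adjoin_map, Set.image_singleton] at h6
    set W : IntermediateField K (AlgebraicClosure K) :=
      Subfield.toIntermediateField (E₀ ⊔ adjoin k ({β} : Set (AlgebraicClosure K))).toSubfield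
        (fun x => (le_sup_left : E₀ ≤ E₀ ⊔ adjoin k ({β} : Set (AlgebraicClosure K)))
          ⟨x, rfl⟩) with hW
    have h7 : IntermediateField.adjoin K ({β} : Set (AlgebraicClosure K)) ≤ W := by
      rw [adjoin_le_iff]
      intro z hz
      rw [Set.mem_singleton_iff] at hz
      rw [hz]
      show β ∈ (E₀ ⊔ adjoin k ({β} : Set (AlgebraicClosure K))).toSubfield
      exact (le_sup_right : adjoin k ({β} : Set (AlgebraicClosure K))
        ≤ E₀ ⊔ adjoin k ({β} : Set (AlgebraicClosure K))) (subset_adjoin k _ rfl)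
    exact h7 h6

end RDTop
open IntermediateField Polynomial

section RDMain
variable (k K L M : Type) [Field k] [CharZero k] [Field K] [Field L] [Field M]
    [Algebra k K] [Algebra k L] [Algebra k M]
    [Algebra K L] [Algebra L M] [Algebra K M]
    [IsScalarTower k K L] [IsScalarTower k L M] [IsScalarTower k K M]
    [IsScalarTower K L M]

theorem rdle_KM_KL {d : ℕ} (h : RDLE k K M d) : RDLE k K L d := by
  obtain ⟨r, E, h0, hstep, f, hrange, hf⟩ := h
  refine ⟨r, E, h0, hstep, f.comp (IsScalarTower.toAlgHom k L M), ?_, ?_⟩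
  · rintro x ⟨y, rfl⟩
    exact hrange ⟨algebraMap L M y, rfl⟩
  · intro x
    show f (algebraMap L M (algebraMap K L x)) = _
    rw [← IsScalarTower.algebraMap_apply K L M]
    exact hf x

theorem rdle_KM_LM {d : ℕ} (h : RDLE k K M d) : RDLE k L M d := by
  obtain ⟨r, E, h0, hstep, f, hrange, hf⟩ := h
  let g : L →ₐ[k] AlgebraicClosure K := f.comp (IsScalarTower.toAlgHom k L M)
  letI : Algebra L (AlgebraicClosure K) := g.toRingHom.toAlgebra
  haveI : IsScalarTower k L (AlgebraicClosure K) :=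
    IsScalarTower.of_algebraMap_eq fun c => (g.commutes c).symm
  haveI : IsScalarTower K L (AlgebraicClosure K) :=
    IsScalarTower.of_algebraMap_eq fun c => by
      show algebraMap K (AlgebraicClosure K) c = f (algebraMap L M (algebraMap K L c))
      rw [← IsScalarTower.algebraMap_apply K L M]
      exact (hf c).symm
  haveI : Algebra.IsAlgebraic L (AlgebraicClosure K) :=
    Algebra.IsAlgebraic.tower_top (K := K) L
  let ι₀ : AlgebraicClosure K →ₐ[L] AlgebraicClosure L := IsAlgClosed.lift
  let ι : AlgebraicClosure K →ₐ[k] AlgebraicClosure L := ι₀.restrictScalars k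
  have hι : ∀ y : L, ι (g y) = algebraMap L (AlgebraicClosure L) y := fun y => ι₀.commutes y
  set LL : IntermediateField k (AlgebraicClosure L) :=
    (IsScalarTower.toAlgHom k L (AlgebraicClosure L)).fieldRange with hLL
  refine ⟨r, fun i => LL ⊔ (E i).map ι, ?_, ?_, ι.comp f, ?_, ?_⟩
  · have hmap : (E 0).map ι ≤ LL := by
      rw [h0]
      rintro x ⟨z, ⟨c, rfl⟩, rfl⟩
      refine ⟨algebraMap K L c, ?_⟩
      show algebraMap L (AlgebraicClosure L) (algebraMap K L c)
          = ι ((IsScalarTower.toAlgHom k K (AlgebraicClosure K)) c)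
      rw [← hι (algebraMap K L c)]
      congr 1
      show g (algebraMap K L c) = algebraMap K (AlgebraicClosure K) c
      show f (algebraMap L M (algebraMap K L c)) = _
      rw [← IsScalarTower.algebraMap_apply K L M]
      exact hf c
    exact sup_eq_left.2 hmap
  · intro i
    exact RDHelp.rdStep_map_sup ι LL (hstep i)
  · rintro x ⟨y, rfl⟩
    show ι (f y) ∈ _
    exact (le_sup_right : (E (Fin.last r)).map ι ≤ LL ⊔ (E (Fin.last r)).map ι)
      ⟨f y, hrange ⟨y, rfl⟩, rfl⟩
  · intro x
    show ι (f (algebraMap L M x)) = _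
    exact hι x

theorem rdle_comp {d₁ d₂ : ℕ} (h1 : RDLE k K L d₁) (h2 : RDLE k L M d₂) :
    RDLE k K M (max d₁ d₂) := by
  classical
  obtain ⟨r, E, h0, hstep, fL, hrangeL, hfK⟩ := h1
  obtain ⟨s, E', h0', hstep', fM, hrangeM, hfL⟩ := h2
  letI : Algebra L (AlgebraicClosure K) := fL.toRingHom.toAlgebra
  haveI : IsScalarTower k L (AlgebraicClosure K) :=
    IsScalarTower.of_algebraMap_eq fun c => (fL.commutes c).symm
  haveI : IsScalarTower K L (AlgebraicClosure K) :=
    IsScalarTower.of_algebraMap_eq fun c => (hfK c).symm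
  haveI : Algebra.IsAlgebraic L (AlgebraicClosure K) :=
    Algebra.IsAlgebraic.tower_top (K := K) L
  let ι₀ : AlgebraicClosure L →ₐ[L] AlgebraicClosure K := IsAlgClosed.lift
  let ι : AlgebraicClosure L →ₐ[k] AlgebraicClosure K := ι₀.restrictScalars k
  have hι : ∀ y : L, ι (algebraMap L (AlgebraicClosure L) y) = fL y := fun y => ι₀.commutes y
  have hLLmap : ((IsScalarTower.toAlgHom k L (AlgebraicClosure L)).fieldRange).map ι
      ≤ E (Fin.last r) := by
    rintro x ⟨z, ⟨c, rfl⟩, rfl⟩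
    have h3 : ι ((IsScalarTower.toAlgHom k L (AlgebraicClosure L)) c) = fL c := hι c
    show ι ((IsScalarTower.toAlgHom k L (AlgebraicClosure L)) c) ∈ E (Fin.last r)
    rw [h3]
    exact hrangeL ⟨c, rfl⟩
  let Efun : ℕ → IntermediateField k (AlgebraicClosure K) := fun n =>
    if h : n ≤ r then E ⟨n, by omega⟩
    else E (Fin.last r) ⊔ (E' ⟨min (n - r) s, by omega⟩).map ι
  have hlow : ∀ (n : ℕ) (hn : n ≤ r), Efun n = E ⟨n, by omega⟩ := fun n hn => dif_pos hn
  have hhigh : ∀ (n : ℕ) (hn : r < n),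
      Efun n = E (Fin.last r) ⊔ (E' ⟨min (n - r) s, by omega⟩).map ι :=
    fun n hn => dif_neg (by omega)
  have hhigh' : ∀ (j : ℕ) (hj : j ≤ s),
      Efun (r + j) = E (Fin.last r) ⊔ (E' ⟨j, by omega⟩).map ι := by
    intro j hj
    rcases Nat.eq_zero_or_pos j with hj0 | hj0
    · subst hj0
      rw [hlow (r + 0) (by omega)]
      have h1 : (⟨r + 0, by omega⟩ : Fin (r + 1)) = Fin.last r := Fin.ext (by simp)
      have h2 : (⟨0, by omega⟩ : Fin (s + 1)) = 0 := rfl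
      rw [h1, h2, h0']
      exact (sup_eq_left.2 hLLmap).symm
    · rw [hhigh (r + j) (by omega)]
      exact congrArg (fun z => E (Fin.last r) ⊔ (E' z).map ι) (Fin.ext (by simp; omega))
  refine ⟨r + s, fun i => Efun (i : ℕ), ?_, ?_, ι.comp fM, ?_, ?_⟩
  · show Efun ((0 : Fin (r + s + 1)) : ℕ) = _
    have : ((0 : Fin (r + s + 1)) : ℕ) = 0 := rfl
    rw [this, hlow 0 (by omega)]
    rw [show (⟨0, by omega⟩ : Fin (r + 1)) = 0 from rfl]
    exact h0
  · intro i
    show RDStep k (AlgebraicClosure K) (max d₁ d₂) (Efun ((i.castSucc : Fin (r+s+1)) : ℕ))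
      (Efun ((i.succ : Fin (r+s+1)) : ℕ))
    rw [Fin.coe_castSucc, Fin.val_succ]
    by_cases hir : (i : ℕ) < r
    · rw [hlow (i : ℕ) (by omega), hlow ((i : ℕ) + 1) (by omega)]
      have e1 : (⟨(i : ℕ), by omega⟩ : Fin (r + 1)) = (⟨(i : ℕ), hir⟩ : Fin r).castSucc :=
        Fin.ext rfl
      have e2 : (⟨(i : ℕ) + 1, by omega⟩ : Fin (r + 1)) = (⟨(i : ℕ), hir⟩ : Fin r).succ :=
        Fin.ext rfl
      rw [e1, e2]
      exact RDHelp.rdStep_mono (le_max_left d₁ d₂) (hstep ⟨(i : ℕ), hir⟩)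
    · have hj : (i : ℕ) - r < s := by
        have := i.2
        omega
      have hi1 : (i : ℕ) = r + ((i : ℕ) - r) := by omega
      have hi2 : (i : ℕ) + 1 = r + ((i : ℕ) - r + 1) := by omega
      rw [hi1, hhigh' _ (by omega)]
      rw [show r + ((i : ℕ) - r) + 1 = r + ((i : ℕ) - r + 1) from by omega,
        hhigh' _ (by omega)]
      have e1 : (⟨(i : ℕ) - r, by omega⟩ : Fin (s + 1))
          = (⟨(i : ℕ) - r, hj⟩ : Fin s).castSucc := Fin.ext rfl
      have e2 : (⟨(i : ℕ) - r + 1, by omega⟩ : Fin (s + 1))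
          = (⟨(i : ℕ) - r, hj⟩ : Fin s).succ := Fin.ext rfl
      rw [e1, e2]
      exact RDHelp.rdStep_map_sup ι (E (Fin.last r))
        (RDHelp.rdStep_mono (le_max_right d₁ d₂) (hstep' ⟨(i : ℕ) - r, hj⟩))
  · show AlgHom.fieldRange (ι.comp fM) ≤ Efun ((Fin.last (r + s) : Fin (r+s+1)) : ℕ)
    have hval : ((Fin.last (r + s) : Fin (r+s+1)) : ℕ) = r + s := rfl
    rw [hval, hhigh' s (le_refl s)]
    rintro x ⟨y, rfl⟩
    show ι (fM y) ∈ _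
    refine (le_sup_right : (E' ⟨s, by omega⟩).map ι ≤ _) ⟨fM y, ?_, rfl⟩
    have : (⟨s, by omega⟩ : Fin (s + 1)) = Fin.last s := rfl
    rw [this]
    exact hrangeM ⟨y, rfl⟩
  · intro x
    show ι (fM (algebraMap K M x)) = algebraMap K (AlgebraicClosure K) x
    rw [IsScalarTower.algebraMap_apply K L M x]
    rw [hfL (algebraMap K L x), hι (algebraMap K L x)]
    exact hfK x

end RDMain

/-- For a tower of finite field extensions `K ⊆ L ⊆ M` over a characteristic-zero base
field `k`, the resolvent degree satisfies `RD(M/K) = max (RD(M/L)) (RD(L/K))`. -/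
theorem rd_comp (k K L M : Type) [Field k] [CharZero k] [Field K] [Field L] [Field M]
    [Algebra k K] [Algebra k L] [Algebra k M]
    [Algebra K L] [Algebra L M] [Algebra K M]
    [IsScalarTower k K L] [IsScalarTower k L M] [IsScalarTower k K M]
    [IsScalarTower K L M]
    [FiniteDimensional K L] [FiniteDimensional L M] :
    RD k K M = max (RD k L M) (RD k K L) := by
  have hne2 : ∃ d, RDLE k L M d := rdle_exists k L M
  have hne3 : ∃ d, RDLE k K L d := rdle_exists k K L
  set a := sInf {d | RDLE k L M d} with ha
  set b := sInf {d | RDLE k K L d} with hb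
  have hmem : RDLE k K M (max a b) := by
    have h := rdle_comp k K L M (rdle_mono (le_max_right a b) (Nat.sInf_mem hne3))
      (rdle_mono (le_max_left a b) (Nat.sInf_mem hne2))
    simpa using h
  show sInf {d | RDLE k K M d} = max a b
  apply le_antisymm
  · exact Nat.sInf_le hmem
  · have h1 : RDLE k K M (sInf {d | RDLE k K M d}) := Nat.sInf_mem (s := {d | RDLE k K M d}) ⟨_, hmem⟩
    exact max_le (Nat.sInf_le (rdle_KM_LM k K L M h1)) (Nat.sInf_le (rdle_KM_KL k K L M h1))

end
end
end

section
/- Let L/K be a finite separable field extension over a characteristic-0 field k and let L̃/K be a Galois closure of L/K. Then RD(L̃/K) = RD(L/K). -/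
noncomputable section

variable (k : Type) [Field k]

variable (K L : Type) [Field K] [Field L] [Algebra k K] [Algebra k L]

namespace RDAux

open IntermediateField Polynomial

variable {k : Type} [Field k] {Ω : Type} [Field Ω] [Algebra k Ω]

set_option linter.unusedSectionVars false

theorem aeval_map_comm {T T' X X' : Type*} [Field T] [Field T'] [Field X] [Field X']
    [Algebra T X] [Algebra T' X'] (φ : T →+* T') (Φ : X →+* X')
    (hcomp : ∀ t, Φ (algebraMap T X t) = algebraMap T' X' (φ t)) (x : X) (p : Polynomial T) :
    Polynomial.aeval (Φ x) (p.map φ) = Φ (Polynomial.aeval x p) := by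
  rw [Polynomial.aeval_def, Polynomial.aeval_def, Polynomial.eval₂_map, Polynomial.hom_eval₂]
  congr 1
  ext t
  simp [hcomp t]

theorem isAlg_map {T T' X X' : Type*} [Field T] [Field T'] [Field X] [Field X']
    [Algebra T X] [Algebra T' X'] (φ : T →+* T') (Φ : X →+* X')
    (hcomp : ∀ t, Φ (algebraMap T X t) = algebraMap T' X' (φ t)) {x : X}
    (h : IsAlgebraic T x) : IsAlgebraic T' (Φ x) := by
  obtain ⟨p, hp0, hp⟩ := h
  refine ⟨p.map φ, fun h0 => hp0 ?_, ?_⟩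
  · rwa [Polynomial.map_eq_zero_iff φ.injective] at h0
  · rw [aeval_map_comm φ Φ hcomp, hp, map_zero]

theorem isAlg_comap {T T' X X' : Type*} [Field T] [Field T'] [Field X] [Field X']
    [Algebra T X] [Algebra T' X'] (φ : T ≃+* T') (Φ : X →+* X')
    (hcomp : ∀ t, Φ (algebraMap T X t) = algebraMap T' X' (φ t)) {x : X}
    (h : IsAlgebraic T' (Φ x)) : IsAlgebraic T x := by
  obtain ⟨p, hp0, hp⟩ := h
  refine ⟨p.map φ.symm.toRingHom, fun h0 => hp0 ?_, ?_⟩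
  · rwa [Polynomial.map_eq_zero_iff φ.symm.injective] at h0
  · apply Φ.injective
    rw [map_zero, ← aeval_map_comm φ.toRingHom Φ hcomp x (p.map φ.symm.toRingHom),
      Polynomial.map_map]
    have : φ.toRingHom.comp φ.symm.toRingHom = RingHom.id T' := by ext t; simp
    rw [this, Polynomial.map_id, hp]


section transfers

variable {X X' : Type} [Field X] [Field X'] [Algebra k X] [Algebra k X']

/-- ring equiv between `adjoin k S` and `adjoin k (Φ '' S)`. -/
def adjoinMapEquiv (Φ : X →ₐ[k] X') (S : Set X) :
    ↥(adjoin k S) ≃+* ↥(adjoin k (Φ '' S)) :=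
  ((equivMap (adjoin k S) Φ).trans (equivOfEq (adjoin_map _ _ _))).toRingEquiv

theorem adjoinMapEquiv_coe (Φ : X →ₐ[k] X') (S : Set X) (a : ↥(adjoin k S)) :
    (algebraMap ↥(adjoin k (Φ '' S)) X' (adjoinMapEquiv Φ S a)) = Φ (algebraMap _ X a) := rfl

theorem isAlg_adjoin_map (Φ : X →ₐ[k] X') (S : Set X) {x : X}
    (h : IsAlgebraic ↥(adjoin k S) x) : IsAlgebraic ↥(adjoin k (Φ '' S)) (Φ x) :=
  isAlg_map (adjoinMapEquiv Φ S).toRingHom Φ.toRingHom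
    (fun t => (adjoinMapEquiv_coe Φ S t).symm) h

theorem isAlg_adjoin_comap (Φ : X →ₐ[k] X') (S : Set X) {x : X}
    (h : IsAlgebraic ↥(adjoin k (Φ '' S)) (Φ x)) : IsAlgebraic ↥(adjoin k S) x :=
  isAlg_comap (adjoinMapEquiv Φ S) Φ.toRingHom
    (fun t => (adjoinMapEquiv_coe Φ S t).symm) h

theorem trdegLE_congr (e : X ≃ₐ[k] X') {d : ℕ} (h : TrdegLE k X d) : TrdegLE k X' d := by
  classical
  obtain ⟨s, hcard, halg⟩ := h
  refine ⟨s.image e, le_trans (Finset.card_image_le) hcard, ⟨fun y => ?_⟩⟩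
  have h1 : IsAlgebraic ↥(adjoin k ((e : X →ₐ[k] X') '' (s : Set X))) (e (e.symm y)) :=
    isAlg_adjoin_map e.toAlgHom (s : Set X) (halg.isAlgebraic (e.symm y))
  rw [e.apply_symm_apply] at h1
  have hset : ((s.image e : Finset X') : Set X') = (e : X →ₐ[k] X') '' (s : Set X) := by
    simp [Finset.coe_image]
  rw [hset]
  exact h1

end transfers

/-- Ω-level version of TrdegLE for intermediate fields. -/
def TrdegLE'' (F : IntermediateField k Ω) (d : ℕ) : Prop :=
  ∃ s : Finset Ω, ↑s ⊆ (F : Set Ω) ∧ s.card ≤ d ∧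
    ∀ x ∈ F, IsAlgebraic ↥(adjoin k (s : Set Ω)) x

theorem trdegLE_iff (F : IntermediateField k Ω) (d : ℕ) :
    TrdegLE k ↥F d ↔ TrdegLE'' F d := by
  classical
  constructor
  · rintro ⟨s, hcard, halg⟩
    refine ⟨s.image F.val, ?_, le_trans (Finset.card_image_le) hcard, ?_⟩
    · intro x hx
      simp only [Finset.coe_image, Set.mem_image] at hx
      obtain ⟨y, _, rfl⟩ := hx
      exact y.2
    · intro x hx
      have h1 : IsAlgebraic ↥(adjoin k ((F.val : ↥F →ₐ[k] Ω) '' (s : Set ↥F))) (F.val ⟨x, hx⟩) :=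
        isAlg_adjoin_map F.val (s : Set ↥F) (halg.isAlgebraic ⟨x, hx⟩)
      have hset : ((s.image F.val : Finset Ω) : Set Ω) = (F.val : ↥F →ₐ[k] Ω) '' (s : Set ↥F) := by
        simp [Finset.coe_image]
      rw [hset]
      exact h1
  · rintro ⟨s, hsub, hcard, halg⟩
    classical
    set s' : Finset ↥F := s.attach.image (fun x => (⟨x.1, hsub x.2⟩ : ↥F)) with hs'
    refine ⟨s', le_trans (Finset.card_image_le) (by simpa using hcard), ⟨fun y => ?_⟩⟩
    apply isAlg_adjoin_comap F.val
    have hset : (F.val : ↥F →ₐ[k] Ω) ''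
        ((s' : Finset ↥F) : Set ↥F)
        = (s : Set Ω) := by
      ext z
      simp only [hs', Finset.coe_image, Set.mem_image, Finset.mem_coe, Finset.mem_image,
        Finset.mem_attach, true_and]
      constructor
      · rintro ⟨a, ⟨b, rfl⟩, rfl⟩; exact b.2
      · intro hz; exact ⟨⟨z, hsub hz⟩, ⟨⟨z, hz⟩, rfl⟩, rfl⟩
    rw [hset]
    exact halg y.1 y.2


/-- identity-carrier ring equiv between intermediate fields over different bases -/
def carrierEquiv {k' : Type*} [Field k'] [Algebra k' Ω] (F : IntermediateField k Ω)
    (G : IntermediateField k' Ω) (h : ∀ x, x ∈ F ↔ x ∈ G) : ↥F ≃+* ↥G where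
  toFun x := ⟨x.1, (h x.1).1 x.2⟩
  invFun x := ⟨x.1, (h x.1).2 x.2⟩
  left_inv x := rfl
  right_inv x := rfl
  map_mul' x y := rfl
  map_add' x y := rfl

theorem isAlg_mono {F E : IntermediateField k Ω} (h : F ≤ E) {x : Ω}
    (hx : IsAlgebraic ↥F x) : IsAlgebraic ↥E x := by
  have := isAlg_map (inclusion h).toRingHom (RingHom.id Ω) (fun t => rfl) hx
  simpa using this

theorem trdegLE''_sup_adjoin {F : IntermediateField k Ω} {d : ℕ} (h : TrdegLE'' F d)
    {S : Set Ω} (hS : ∀ x ∈ S, IsAlgebraic ↥F x) : TrdegLE'' (F ⊔ adjoin k S) d := by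
  obtain ⟨s, hsub, hcard, halg⟩ := h
  refine ⟨s, fun x hx => (le_sup_left : F ≤ F ⊔ adjoin k S) (hsub hx), hcard, ?_⟩
  set B : IntermediateField k Ω := adjoin k (s : Set Ω) with hB
  have hBF : B ≤ F := adjoin_le_iff.mpr hsub
  set FB : IntermediateField ↥B Ω := extendScalars hBF with hFB
  haveI halgBF : Algebra.IsAlgebraic ↥B ↥FB :=
    ⟨fun y => (isAlgebraic_iff (S := FB)).mpr (halg y.1 y.2)⟩
  haveI hintBF : Algebra.IsIntegral ↥B ↥FB := Algebra.IsAlgebraic.isIntegral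
  -- all elements of F and S are integral over B
  have hFint : ∀ x : Ω, x ∈ (F : Set Ω) ∪ S → IsIntegral ↥B x := by
    rintro x (hx | hx)
    · exact (halg x hx).isIntegral
    · -- x is algebraic over F, hence over FB, hence over B
      have h1 : IsAlgebraic ↥FB x := by
        have : IsAlgebraic ↥FB ((RingHom.id Ω) x) :=
          isAlg_map (carrierEquiv F FB (fun y => Iff.rfl)).toRingHom (RingHom.id Ω)
          (fun t => rfl) (hS x hx)
        simpa using this
      exact isIntegral_trans x h1.isIntegral
  -- adjoin B (F ∪ S) is algebraic over B
  haveI h3 : Algebra.IsAlgebraic ↥B ↥(adjoin ↥B ((F : Set Ω) ∪ S)) :=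
    isAlgebraic_adjoin hFint
  intro x hx
  have hmem : x ∈ adjoin ↥B ((F : Set Ω) ∪ S) := by
    have hle : F ⊔ adjoin k S ≤ restrictScalars k (adjoin ↥B ((F : Set Ω) ∪ S)) := by
      apply sup_le
      · intro y hy
        exact subset_adjoin ↥B _ (Or.inl hy)
      · apply adjoin_le_iff.mpr
        intro y hy
        exact subset_adjoin ↥B _ (Or.inr hy)
    exact hle hx
  exact (isAlgebraic_iff (S := adjoin ↥B ((F : Set Ω) ∪ S))).mp (h3.isAlgebraic ⟨x, hmem⟩)

theorem trdegLE_sup {F : IntermediateField k Ω} {d : ℕ} (h : TrdegLE k ↥F d)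
    {S : Set Ω} (hS : ∀ x ∈ S, IsAlgebraic ↥F x) : TrdegLE k ↥(F ⊔ adjoin k S) d :=
  (trdegLE_iff _ _).mpr (trdegLE''_sup_adjoin ((trdegLE_iff _ _).mp h) hS)


section bridge

variable {F Ft : IntermediateField k Ω}

def inclusionLEquiv (h : F ≤ Ft) :
    letI : Algebra ↥F ↥Ft := (inclusion h).toRingHom.toAlgebra
    letI : Module ↥F ↥Ft := Algebra.toModule
    ↥Ft ≃ₗ[↥F] ↥(extendScalars h) := by
  letI : Algebra ↥F ↥Ft := (inclusion h).toRingHom.toAlgebra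
  letI : Module ↥F ↥Ft := Algebra.toModule
  exact
  { toFun := fun x => ⟨x.1, x.2⟩
    invFun := fun x => ⟨x.1, x.2⟩
    left_inv := fun x => rfl
    right_inv := fun x => rfl
    map_add' := fun x y => rfl
    map_smul' := fun c x => rfl }

theorem finrank_inclusion (h : F ≤ Ft) :
    (letI : Algebra ↥F ↥Ft := (inclusion h).toRingHom.toAlgebra
     letI : Module ↥F ↥Ft := Algebra.toModule
     Module.finrank ↥F ↥Ft) = Module.finrank ↥F ↥(extendScalars h) := by
  letI : Algebra ↥F ↥Ft := (inclusion h).toRingHom.toAlgebra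
  letI : Module ↥F ↥Ft := Algebra.toModule
  exact (inclusionLEquiv h).finrank_eq

theorem finiteDimensional_inclusion_iff (h : F ≤ Ft) :
    (letI : Algebra ↥F ↥Ft := (inclusion h).toRingHom.toAlgebra
     letI : Module ↥F ↥Ft := Algebra.toModule
     FiniteDimensional ↥F ↥Ft) ↔ FiniteDimensional ↥F ↥(extendScalars h) := by
  letI : Algebra ↥F ↥Ft := (inclusion h).toRingHom.toAlgebra
  letI : Module ↥F ↥Ft := Algebra.toModule
  constructor
  · intro hfd
    haveI := hfd
    exact Module.Finite.equiv (inclusionLEquiv h)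
  · intro hfd
    exact Module.Finite.equiv (inclusionLEquiv h).symm

theorem extendScalars_eq_adjoin {E T : IntermediateField k Ω} {S : Set Ω} (h : E ≤ T)
    (hT : T = E ⊔ adjoin k S) : extendScalars h = adjoin ↥E S := by
  apply restrictScalars_injective k
  rw [extendScalars_restrictScalars, restrictScalars_adjoin_eq_sup, hT]

end bridge

section key

variable [CharZero k]

theorem charZero_of_field {X : Type*} [Field X] [Algebra k X] : CharZero X :=
  charZero_of_injective_algebraMap (algebraMap k X).injective

/-- simple generator for a finite subextension -/
theorem exists_simple_gen {F Ft : IntermediateField k Ω} (h : F ≤ Ft)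
    (hfd : letI : Algebra ↥F ↥Ft := (inclusion h).toRingHom.toAlgebra
           letI : Module ↥F ↥Ft := Algebra.toModule
           FiniteDimensional ↥F ↥Ft) :
    ∃ a : Ω, IsIntegral ↥F a ∧ Ft = F ⊔ adjoin k {a} := by
  haveI : CharZero Ω := charZero_of_field (k := k) (X := Ω)
  haveI : CharZero ↥F := charZero_of_field (k := k) (X := ↥F)
  haveI hfd' : FiniteDimensional ↥F ↥(extendScalars h) :=
    (finiteDimensional_inclusion_iff h).mp hfd
  haveI : Algebra.IsAlgebraic ↥F ↥(extendScalars h) := Algebra.IsAlgebraic.of_finite _ _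
  haveI : PerfectField ↥F := PerfectField.ofCharZero
  haveI : Algebra.IsSeparable ↥F ↥(extendScalars h) :=
    Algebra.IsAlgebraic.isSeparable_of_perfectField
  obtain ⟨α, hα⟩ := Field.exists_primitive_element ↥F ↥(extendScalars h)
  refine ⟨(α : Ω), ?_, ?_⟩
  · have h1 : IsIntegral ↥F α := IsIntegral.of_finite ↥F α
    exact (IntermediateField.isIntegral_iff (K := ↥F) (S := extendScalars h)).mp h1
  · have h2 : adjoin ↥F {(α : Ω)} = extendScalars h := by
      have := congrArg (IntermediateField.map (extendScalars h).val) hα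
      rw [adjoin_map] at this
      simp only [Set.image_singleton] at this
      have h5 : IntermediateField.map (extendScalars h).val ⊤ = extendScalars h :=
        IntermediateField.lift_top (K := extendScalars h)
      rw [h5] at this
      exact this
    have h3 := congrArg (restrictScalars k) h2
    rwa [extendScalars_restrictScalars, restrictScalars_adjoin_eq_sup, eq_comm] at h3

/-- Key lemma: adjoining an element algebraic over a small subfield is an RDStep. -/
theorem rdStep_adjoin {d : ℕ} {E F : IntermediateField k Ω} {α : Ω}
    (hFE : F ≤ E) (htr : TrdegLE k ↥F d) (hint : IsIntegral ↥F α) :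
    RDStep k Ω d E (E ⊔ adjoin k {α}) := by
  have hintE : IsIntegral ↥E α := (isAlg_mono hFE hint.isAlgebraic).isIntegral
  set p : Polynomial ↥E := minpoly ↥E α with hp
  set S : Set Ω := Set.range (fun i : ℕ => ((p.coeff i : ↥E) : Ω)) with hSdef
  have hSE : S ⊆ (E : Set Ω) := by rintro _ ⟨i, rfl⟩; exact (p.coeff i).2
  -- coefficients of p are algebraic over F
  have hSalg : ∀ x ∈ S, IsAlgebraic ↥F x := by
    rintro _ ⟨i, rfl⟩
    set Ω' := AlgebraicClosure Ω with hΩ'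
    set g : ↥E →+* Ω' := algebraMap ↥E Ω' with hg
    set p' : Polynomial Ω' := p.map g with hp'
    -- p' divides the image of minpoly F α
    have hdvd : p ∣ (minpoly ↥F α).map (inclusion hFE).toRingHom := by
      apply minpoly.dvd
      rw [aeval_def, eval₂_map]
      have : (algebraMap ↥E Ω).comp (inclusion hFE).toRingHom = algebraMap ↥F Ω := by
        ext t; rfl
      rw [this, ← aeval_def, minpoly.aeval]
    have hdvd' : p' ∣ (minpoly ↥F α).map (algebraMap ↥F Ω') := by
      have h1 := Polynomial.map_dvd g hdvd
      rwa [Polynomial.map_map, show g.comp (inclusion hFE).toRingHom = algebraMap ↥F Ω' by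
        ext t
        show g (inclusion hFE t) = algebraMap ↥F Ω' t
        rw [IsScalarTower.algebraMap_apply ↥F Ω Ω', IsScalarTower.algebraMap_apply ↥E Ω Ω']
        rfl] at h1
    -- roots of p' are integral over F
    have hroots : ∀ β ∈ p'.roots, β ∈ integralClosure ↥F Ω' := by
      intro β hβ
      have hev : Polynomial.eval β ((minpoly ↥F α).map (algebraMap ↥F Ω')) = 0 := by
        obtain ⟨c, hc⟩ := hdvd'
        rw [hc, eval_mul, (mem_roots'.mp hβ).2, zero_mul]
      have : IsAlgebraic ↥F β :=
        ⟨minpoly ↥F α, minpoly.ne_zero hint, by rwa [aeval_def, ← eval_map]⟩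
      exact this.isIntegral
    -- p' is a product of linear factors with integral roots
    have hmonic : p'.Monic := (minpoly.monic hintE).map g
    have hsplit : p' = (p'.roots.map (fun β => X - C β)).prod := by
      have := IsAlgClosed.splits p'
      exact this.eq_prod_roots_of_monic hmonic
    set q : Polynomial ↥(integralClosure ↥F Ω') :=
      (p'.roots.attach.map
        (fun β => X - C (⟨β.1, hroots β.1 β.2⟩ : ↥(integralClosure ↥F Ω')))).prod with hq
    have hqmap : q.map (algebraMap ↥(integralClosure ↥F Ω') Ω') = p' := by
      rw [hq, Polynomial.map_multiset_prod, Multiset.map_map]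
      have h4 : ((fun r => Polynomial.map (algebraMap ↥(integralClosure ↥F Ω') Ω') r) ∘
          (fun β : {x // x ∈ p'.roots} =>
            X - C (⟨β.1, hroots β.1 β.2⟩ : ↥(integralClosure ↥F Ω'))))
          = ((fun b : Ω' => X - C b) ∘ Subtype.val) := by
        funext β
        simp only [Function.comp_apply, Polynomial.map_sub, Polynomial.map_X, Polynomial.map_C]
        rfl
      rw [h4, ← Multiset.map_map (fun b : Ω' => X - C b) Subtype.val, Multiset.attach_map_val]
      exact hsplit.symm
    -- hence each coefficient of p' is integral over F
    have hcoeff : ∀ i : ℕ, IsIntegral ↥F (p'.coeff i) := by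
      intro i
      rw [← hqmap, Polynomial.coeff_map]
      exact (q.coeff i).2
    -- transfer back to Ω
    have : IsAlgebraic ↥F ((algebraMap Ω Ω') ((p.coeff i : ↥E) : Ω)) := by
      have h2 : p'.coeff i = (algebraMap Ω Ω') ((p.coeff i : ↥E) : Ω) := by
        rw [hp', Polynomial.coeff_map, IsScalarTower.algebraMap_apply ↥E Ω Ω']
        rfl
      rw [← h2]
      exact (hcoeff i).isAlgebraic
    exact isAlg_comap (RingEquiv.refl ↥F) (algebraMap Ω Ω')
      (fun t => (IsScalarTower.algebraMap_apply ↥F Ω Ω' t)) this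
  -- the enlarged base field
  set F'' : IntermediateField k Ω := F ⊔ adjoin k S with hF''
  have htr'' : TrdegLE k ↥F'' d := trdegLE_sup htr hSalg
  have hF''E : F'' ≤ E := sup_le hFE (adjoin_le_iff.mpr hSE)
  have hint'' : IsIntegral ↥F'' α :=
    (isAlg_mono (le_sup_left : F ≤ F'') hint.isAlgebraic).isIntegral
  set Ft'' : IntermediateField k Ω := F'' ⊔ adjoin k {α} with hFt''
  have hsup : E ⊔ Ft'' = E ⊔ adjoin k {α} := by
    rw [hFt'', ← sup_assoc, sup_eq_left.mpr hF''E]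
  have hinc : (algebraMap ↥E Ω).comp (inclusion hF''E).toRingHom = algebraMap ↥F'' Ω := by
    ext t; rfl
  -- lower p to F''
  have hlift : p ∈ Polynomial.lifts (inclusion hF''E).toRingHom := by
    rw [Polynomial.lifts_iff_coeff_lifts]
    intro n
    refine ⟨⟨((p.coeff n : ↥E) : Ω), ?_⟩, ?_⟩
    · exact (le_sup_right : adjoin k S ≤ F'') (subset_adjoin k S ⟨n, rfl⟩)
    · apply Subtype.ext; rfl
  obtain ⟨q, hq⟩ := (Polynomial.mem_lifts p).mp hlift
  have hqdeg : q.natDegree = p.natDegree := by rw [← hq, Polynomial.natDegree_map]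
  have hqmonic : q.Monic := by
    have hm : p.Monic := minpoly.monic hintE
    rw [← hq] at hm
    exact ((inclusion hF''E).toRingHom.injective.monic_map_iff).mpr hm
  have hqaeval : Polynomial.aeval α q = 0 := by
    rw [aeval_def, ← hinc, ← Polynomial.eval₂_map, hq, ← aeval_def]
    exact minpoly.aeval ↥E α
  have hdegle : (minpoly ↥F'' α).natDegree ≤ p.natDegree := by
    rw [← hqdeg]
    exact Polynomial.natDegree_le_natDegree (minpoly.min ↥F'' α hqmonic hqaeval)
  have hdegge : p.natDegree ≤ (minpoly ↥F'' α).natDegree := by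
    have hdvd2 : p ∣ (minpoly ↥F'' α).map (inclusion hF''E).toRingHom := by
      apply minpoly.dvd
      rw [aeval_def, Polynomial.eval₂_map, hinc, ← aeval_def, minpoly.aeval]
    have hne : (minpoly ↥F'' α).map (inclusion hF''E).toRingHom ≠ 0 := by
      intro h0
      apply minpoly.ne_zero hint''
      rwa [Polynomial.map_eq_zero_iff (inclusion hF''E).injective] at h0
    have h6 := Polynomial.natDegree_le_of_dvd hdvd2 hne
    rwa [Polynomial.natDegree_map] at h6
  have hdeg : (minpoly ↥F'' α).natDegree = p.natDegree := le_antisymm hdegle hdegge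
  -- the extension fields as adjoins
  have hextFt : extendScalars (le_sup_left : F'' ≤ Ft'') = adjoin ↥F'' {α} :=
    extendScalars_eq_adjoin _ hFt''
  have hextE : extendScalars (le_sup_left : E ≤ E ⊔ Ft'') = adjoin ↥E {α} :=
    extendScalars_eq_adjoin _ hsup
  haveI hfd1 : FiniteDimensional ↥F'' ↥(adjoin ↥F'' {α}) := adjoin.finiteDimensional hint''
  refine ⟨F'', Ft'', hF''E, le_sup_left, htr'', ?_, hsup.symm, ?_⟩
  · exact (finiteDimensional_inclusion_iff (le_sup_left : F'' ≤ Ft'')).mpr (hextFt ▸ hfd1)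
  · rw [finrank_inclusion (le_sup_left : F'' ≤ Ft''),
      finrank_inclusion (le_sup_left : E ≤ E ⊔ Ft''), hextFt, hextE,
      adjoin.finrank hint'', adjoin.finrank hintE, hdeg]

theorem rdStep_le {d : ℕ} {E E' : IntermediateField k Ω} (h : RDStep k Ω d E E') : E ≤ E' := by
  obtain ⟨F, Ft, hFE, hFFt, _, _, hE', _⟩ := h
  rw [hE']; exact le_sup_left

theorem rdStep_sup {d : ℕ} {E E' : IntermediateField k Ω} (D : IntermediateField k Ω)
    (h : RDStep k Ω d E E') : RDStep k Ω d (D ⊔ E) (D ⊔ E') := by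
  obtain ⟨F, Ft, hFE, hFFt, htr, hfd, hE', _⟩ := h
  obtain ⟨a, hint, hFt⟩ := exists_simple_gen hFFt hfd
  have h1 : RDStep k Ω d (D ⊔ E) ((D ⊔ E) ⊔ adjoin k {a}) :=
    rdStep_adjoin (hFE.trans (le_sup_right : E ≤ D ⊔ E)) htr hint
  have h2 : D ⊔ E' = (D ⊔ E) ⊔ adjoin k {a} := by
    have h3 : E ⊔ Ft = E ⊔ adjoin k {a} := by rw [hFt, ← sup_assoc, sup_eq_left.mpr hFE]
    rw [hE', h3, sup_assoc]
  rw [h2]; exact h1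

theorem rdStep_map {d : ℕ} {E E' : IntermediateField k Ω} (σ : Ω ≃ₐ[k] Ω)
    (h : RDStep k Ω d E E') :
    RDStep k Ω d (E.map σ.toAlgHom) (E'.map σ.toAlgHom) := by
  obtain ⟨F, Ft, hFE, hFFt, htr, hfd, hE', _⟩ := h
  obtain ⟨a, hint, hFt⟩ := exists_simple_gen hFFt hfd
  have htrσ : TrdegLE k ↥(F.map σ.toAlgHom) d := trdegLE_congr (equivMap F σ.toAlgHom) htr
  have hintσ : IsIntegral ↥(F.map σ.toAlgHom) (σ a) := by
    have h4 := isAlg_map ((equivMap F σ.toAlgHom) : ↥F ≃ₐ[k] ↥(F.map σ.toAlgHom)).toRingEquiv.toRingHom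
      σ.toRingEquiv.toRingHom (fun t => rfl) hint.isAlgebraic
    exact h4.isIntegral
  have hmono : F.map σ.toAlgHom ≤ E.map σ.toAlgHom := by
    intro x hx
    obtain ⟨y, hy, rfl⟩ := hx
    exact ⟨y, hFE hy, rfl⟩
  have h1 := rdStep_adjoin hmono htrσ hintσ
  have h2 : E'.map σ.toAlgHom = (E.map σ.toAlgHom) ⊔ adjoin k {σ a} := by
    have h3 : E' = E ⊔ adjoin k {a} := by rw [hE', hFt, ← sup_assoc, sup_eq_left.mpr hFE]
    rw [h3, IntermediateField.map_sup, adjoin_map, Set.image_singleton]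
    rfl
  rw [h2]; exact h1

end key


-- chains
section chains
variable [CharZero k]

theorem chain_le {d : ℕ} {E E' : IntermediateField k Ω}
    (h : Relation.ReflTransGen (RDStep k Ω d) E E') : E ≤ E' := by
  induction h with
  | refl => exact le_rfl
  | tail _ hstep ih => exact ih.trans (rdStep_le hstep)

theorem chain_sup {d : ℕ} {E E' : IntermediateField k Ω} (D : IntermediateField k Ω)
    (h : Relation.ReflTransGen (RDStep k Ω d) E E') :
    Relation.ReflTransGen (RDStep k Ω d) (D ⊔ E) (D ⊔ E') :=
  Relation.ReflTransGen.lift (fun X => D ⊔ X) (fun _ _ hab => rdStep_sup D hab) _ _ h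

theorem chain_map {d : ℕ} {E E' : IntermediateField k Ω} (σ : Ω ≃ₐ[k] Ω)
    (h : Relation.ReflTransGen (RDStep k Ω d) E E') :
    Relation.ReflTransGen (RDStep k Ω d) (E.map σ.toAlgHom) (E'.map σ.toAlgHom) :=
  Relation.ReflTransGen.lift (fun X : IntermediateField k Ω => X.map σ.toAlgHom)
    (fun _ _ hab => rdStep_map σ hab) _ _ h

end chains

section rdle

variable {K L : Type} [Field K] [Field L] [Algebra k K] [Algebra k L]
  [Algebra K L] [IsScalarTower k K L]

theorem rdle_iff_chain (d : ℕ) : RDLE k K L d ↔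
    ∃ Efin : IntermediateField k (AlgebraicClosure K),
      Relation.ReflTransGen (RDStep k (AlgebraicClosure K) d)
        ((IsScalarTower.toAlgHom k K (AlgebraicClosure K)).fieldRange) Efin ∧
      ∃ f : L →ₐ[k] AlgebraicClosure K,
        f.fieldRange ≤ Efin ∧
        ∀ x : K, f (algebraMap K L x) = algebraMap K (AlgebraicClosure K) x := by
  constructor
  · rintro ⟨r, E, hE0, hsteps, f, hf1, hf2⟩
    refine ⟨E (Fin.last r), ?_, f, hf1, hf2⟩
    rw [← hE0]
    have key : ∀ i : Fin (r+1),
        Relation.ReflTransGen (RDStep k (AlgebraicClosure K) d) (E 0) (E i) := by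
      intro i
      induction i using Fin.induction with
      | zero => exact Relation.ReflTransGen.refl
      | succ i ih => exact ih.tail (hsteps i)
    exact key (Fin.last r)
  · rintro ⟨Efin, hchain, f, hf1, hf2⟩
    have key : ∀ (X Y : IntermediateField k (AlgebraicClosure K)),
        Relation.ReflTransGen (RDStep k (AlgebraicClosure K) d) X Y →
        ∃ (r : ℕ) (E : Fin (r+1) → IntermediateField k (AlgebraicClosure K)),
          E 0 = X ∧ (∀ i : Fin r, RDStep k (AlgebraicClosure K) d (E i.castSucc) (E i.succ)) ∧
          E (Fin.last r) = Y := by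
      intro X Y h
      induction h with
      | refl => exact ⟨0, fun _ => X, rfl, fun i => i.elim0, rfl⟩
      | @tail b c _ hbc ih =>
        obtain ⟨r, E, h0, hsteps, hlast⟩ := ih
        refine ⟨r+1, Fin.snoc E c, ?_, ?_, ?_⟩
        · rw [← h0]
          have : (0 : Fin (r+2)) = Fin.castSucc (0 : Fin (r+1)) := rfl
          rw [this, Fin.snoc_castSucc]
        · intro i
          induction i using Fin.lastCases with
          | last => simpa [Fin.snoc_castSucc, Fin.succ_last, Fin.snoc_last, hlast] using hbc
          | cast j => simp only [Fin.succ_castSucc, Fin.snoc_castSucc]; exact hsteps j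
        · simp [Fin.snoc_last]
    obtain ⟨r, E, h0, hsteps, hlast⟩ := key _ _ hchain
    exact ⟨r, E, h0, hsteps, f, hlast ▸ hf1, hf2⟩

theorem rdle_easy {Lt : Type} [Field Lt] [Algebra k Lt] [Algebra K Lt] [Algebra L Lt]
    [IsScalarTower k K Lt] [IsScalarTower k L Lt] [IsScalarTower K L Lt]
    (d : ℕ) (h : RDLE k K Lt d) : RDLE k K L d := by
  obtain ⟨r, E, hE0, hsteps, f, hf1, hf2⟩ := h
  refine ⟨r, E, hE0, hsteps, f.comp (IsScalarTower.toAlgHom k L Lt), ?_, ?_⟩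
  · intro x hx
    obtain ⟨y, rfl⟩ := hx
    exact hf1 ⟨(IsScalarTower.toAlgHom k L Lt) y, rfl⟩
  · intro x
    have h1 : (IsScalarTower.toAlgHom k L Lt) (algebraMap K L x) = algebraMap K Lt x := by
      rw [IsScalarTower.toAlgHom_apply, ← IsScalarTower.algebraMap_apply]
    rw [AlgHom.comp_apply, h1, hf2]

end rdle

section hard

variable [CharZero k]
variable {K L Lt : Type} [Field K] [Field L] [Field Lt]
  [Algebra k K] [Algebra k L] [Algebra k Lt]
  [Algebra K L] [Algebra K Lt] [Algebra L Lt]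
  [IsScalarTower k K L] [IsScalarTower k K Lt] [IsScalarTower k L Lt]
  [IsScalarTower K L Lt] [FiniteDimensional K L] [FiniteDimensional K Lt]
  [IsGalois K Lt]

theorem rdle_hard
    (hmin : ∀ M : IntermediateField K Lt,
      (IsScalarTower.toAlgHom K L Lt).fieldRange ≤ M → Normal K M → M = ⊤)
    (d : ℕ) (h : RDLE k K L d) : RDLE k K Lt d := by
  classical
  rw [rdle_iff_chain] at h
  rw [rdle_iff_chain]
  obtain ⟨Efin, hchain, f, hf1, hf2⟩ := h
  set Ω : Type := AlgebraicClosure K with hΩ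
  set E0 : IntermediateField k Ω := (IsScalarTower.toAlgHom k K Ω).fieldRange with hE0
  -- K-algebra version of f
  set fK : L →ₐ[K] Ω := { toRingHom := f.toRingHom, commutes' := hf2 } with hfK
  -- For every K-embedding e : L →ₐ[K] Ω there is σ : Ω ≃ₐ[K] Ω with σ ∘ fK = e
  have hsigma : ∀ e : L →ₐ[K] Ω, ∃ σ : Ω ≃ₐ[K] Ω, ∀ x : L, σ (fK x) = e x := by
    intro e
    set A : IntermediateField K Ω := fK.fieldRange with hA
    set ε : L ≃ₐ[K] ↥A := AlgEquiv.ofInjectiveField fK with hε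
    set ψ : ↥A →ₐ[K] Ω := e.comp ε.symm.toAlgHom with hψ
    have hK : ∀ s ∈ (Set.univ : Set Ω),
        IsIntegral K s ∧ ((minpoly K s).map (algebraMap K Ω)).Splits := by
      intro s _
      exact ⟨Algebra.IsIntegral.isIntegral s, IsAlgClosed.splits _⟩
    obtain ⟨σ0, hσ0⟩ := IntermediateField.exists_algHom_of_adjoin_splits hK ψ
      (IntermediateField.adjoin_univ K Ω)
    have hbij : Function.Bijective σ0 := Algebra.IsAlgebraic.algHom_bijective σ0
    refine ⟨AlgEquiv.ofBijective σ0 hbij, fun x => ?_⟩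
    have h1 : σ0 (A.val (ε x)) = ψ (ε x) := by rw [← hσ0]; rfl
    have h2 : A.val (ε x) = fK x := rfl
    show σ0 (fK x) = e x
    rw [← h2, h1, hψ, AlgHom.comp_apply]
    congr 1
    exact ε.symm_apply_apply x
  choose σ hσ using hsigma
  -- the normal closure of L in Lt is everything
  have hN : normalClosure K L Lt = ⊤ := by
    apply hmin
    · exact (IsScalarTower.toAlgHom K L Lt).fieldRange_le_normalClosure
    · exact normalClosure.normal K L Lt
  haveI : Algebra.IsAlgebraic K Lt := Algebra.IsAlgebraic.of_finite K Lt
  set g0 : Lt →ₐ[K] Ω := IsAlgClosed.lift with hg0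
  have hg0range : g0.fieldRange ≤ ⨆ e : L →ₐ[K] Ω, e.fieldRange := by
    have hsup : (⨆ φ : L →ₐ[K] Lt, φ.fieldRange) ≤
        IntermediateField.comap g0 (⨆ e : L →ₐ[K] Ω, e.fieldRange) := by
      apply iSup_le
      intro φ z hz
      obtain ⟨w, rfl⟩ := hz
      have h3 : g0 (φ w) ∈ (g0.comp φ).fieldRange := ⟨w, rfl⟩
      exact (le_iSup (fun e : L →ₐ[K] Ω => e.fieldRange) (g0.comp φ)) h3
    intro x hx
    obtain ⟨y, rfl⟩ := hx
    have hy : y ∈ normalClosure K L Lt := by rw [hN]; trivial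
    rw [normalClosure_def] at hy
    exact hsup hy
  -- conjugated chains
  set σk : (L →ₐ[K] Ω) → (Ω ≃ₐ[k] Ω) := fun e => AlgEquiv.restrictScalars k (σ e) with hσk
  have hmapE0 : ∀ e : L →ₐ[K] Ω, E0.map (σk e).toAlgHom = E0 := by
    intro e
    apply le_antisymm
    · rintro x ⟨y, ⟨z, rfl⟩, rfl⟩
      refine ⟨z, ?_⟩
      exact ((σ e).commutes z).symm
    · rintro x ⟨z, rfl⟩
      refine ⟨algebraMap K Ω z, ⟨z, rfl⟩, ?_⟩
      exact ((σ e).commutes z)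
  have hconjchain : ∀ e : L →ₐ[K] Ω,
      Relation.ReflTransGen (RDStep k Ω d) E0 (Efin.map (σk e).toAlgHom) := by
    intro e
    have := chain_map (σk e) hchain
    rwa [hmapE0 e] at this
  -- build the compositum chain
  have hbig : ∀ t : Finset (L →ₐ[K] Ω),
      Relation.ReflTransGen (RDStep k Ω d)
        E0 (E0 ⊔ t.sup (fun e => Efin.map (σk e).toAlgHom)) := by
    intro t
    induction t using Finset.induction_on with
    | empty => simpa using Relation.ReflTransGen.refl
    | @insert a s ha ih =>
      have c2 := chain_sup (E0 ⊔ s.sup (fun e => Efin.map (σk e).toAlgHom)) (hconjchain a)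
      rw [sup_eq_left.mpr (le_sup_left : E0 ≤ E0 ⊔ s.sup (fun e => Efin.map (σk e).toAlgHom))]
        at c2
      have c3 := ih.trans c2
      have c4 : (E0 ⊔ s.sup fun e => Efin.map (σk e).toAlgHom) ⊔ Efin.map (σk a).toAlgHom
          = E0 ⊔ (insert a s).sup fun e => Efin.map (σk e).toAlgHom := by
        rw [Finset.sup_insert, sup_comm (Efin.map (σk a).toAlgHom), ← sup_assoc]
      rwa [c4] at c3
  set C : IntermediateField k Ω := E0 ⊔ Finset.univ.sup (fun e => Efin.map (σk e).toAlgHom)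
    with hC
  have hCalg : ∀ x : K, algebraMap K Ω x ∈ C := by
    intro x
    exact (le_sup_left : E0 ≤ C) ⟨x, rfl⟩
  set CK : IntermediateField K Ω := Subfield.toIntermediateField C.toSubfield hCalg with hCK
  have hCKle : (⨆ e : L →ₐ[K] Ω, e.fieldRange) ≤ CK := by
    apply iSup_le
    intro e z hz
    obtain ⟨w, rfl⟩ := hz
    have h4 : e w ∈ Efin.map (σk e).toAlgHom := by
      refine ⟨f w, hf1 ⟨w, rfl⟩, ?_⟩
      exact hσ e w
    show e w ∈ C
    exact (le_sup_right : _ ≤ C)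
      ((Finset.le_sup (Finset.mem_univ e) : _ ≤ Finset.univ.sup
        (fun e => Efin.map (σk e).toAlgHom)) h4)
  refine ⟨C, hbig Finset.univ, AlgHom.restrictScalars k g0, ?_, fun x => g0.commutes x⟩
  intro x hx
  obtain ⟨y, rfl⟩ := hx
  show g0 y ∈ C
  exact hCKle (hg0range ⟨y, rfl⟩)

end hard



theorem rd_galoisClosure_aux : True := trivial

end RDAux

/-- Let `L/K` be a finite (separable, as we are in characteristic zero) field extension
over a characteristic-zero field `k`, and let `L̃/K` be a Galois closure of `L/K`
(a minimal Galois extension of `K` containing `L`).  Then `RD(L̃/K) = RD(L/K)`. -/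
theorem rd_galoisClosure (k K L Lt : Type) [Field k] [CharZero k] [Field K] [Field L]
    [Field Lt] [Algebra k K] [Algebra k L] [Algebra k Lt]
    [Algebra K L] [Algebra K Lt] [Algebra L Lt]
    [IsScalarTower k K L] [IsScalarTower k K Lt] [IsScalarTower k L Lt]
    [IsScalarTower K L Lt]
    [FiniteDimensional K L] [FiniteDimensional K Lt]
    [IsGalois K Lt]
    (hmin : ∀ M : IntermediateField K Lt,
      (IsScalarTower.toAlgHom K L Lt).fieldRange ≤ M → Normal K M → M = ⊤) :
    RD k K Lt = RD k K L := by
  have hsets : {d | RDLE k K Lt d} = {d | RDLE k K L d} := by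
    ext d
    exact ⟨fun h => RDAux.rdle_easy d h, fun h => RDAux.rdle_hard hmin d h⟩
  unfold RD
  rw [hsets]
end
end

section
/- Let G be a finite group, X a versal G-variety over a characteristic-0 field, and H ⊆ G a subgroup. Then X is also a versal H-variety. -/
noncomputable section

/-- A (model of an irreducible) `G`-variety over `k`, up to birational equivalence:
a function field `E/k` with a `G`-action by `k`-algebra automorphisms, together with a
finitely generated `G`-stable affine model `A ⊆ E` whose fraction field is `E`. -/
structure GVar (k : Type) [Field k] (G : Type) [Group G] where
  E : Type
  [fld : Field E]
  [alg : Algebra k E]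
  act : G →* (E ≃ₐ[k] E)
  A : Subalgebra k E
  fg : A.FG
  stable : ∀ g : G, ∀ x ∈ A, act g x ∈ A
  frac : ∀ x : E, ∃ a ∈ A, ∃ b ∈ A, b ≠ 0 ∧ x = a / b

attribute [instance] GVar.fld GVar.alg

variable {G : Type} [Group G]

/-- A `G`-variety is faithful if `G` acts faithfully. -/
def GVar.Faithful {k : Type} [Field k] (X : GVar k G) : Prop :=
  Function.Injective X.act

/-- A faithful `G`-variety `X` is versal if for every `G`-invariant dense (Zariski) open
`U ⊆ X` (the complement of the vanishing locus of a `G`-stable set `S ⊆ A` containing a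
nonzero element) and every faithful `G`-variety `Y`, there is a `G`-equivariant rational
map `Y ⇢ U` (a `k`-algebra homomorphism `ψ : A → k(Y)`, equivariant for the `G`-actions,
whose image is not contained in the vanishing locus of `S`). -/
def GVar.IsVersal {k : Type} [Field k] (X : GVar k G) : Prop :=
  X.Faithful ∧
  ∀ (S : Set X.E) (hSA : S ⊆ (X.A : Set X.E)),
    (∀ g : G, ∀ x ∈ S, X.act g x ∈ S) → (∃ s ∈ S, s ≠ 0) →
    ∀ Y : GVar k G, Y.Faithful →
      ∃ ψ : X.A →ₐ[k] Y.E,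
        (∀ (g : G) (a : X.A), ψ ⟨X.act g a, X.stable g a a.2⟩ = Y.act g (ψ a)) ∧
        ∃ s, ∃ hs : s ∈ S, ψ ⟨s, hSA hs⟩ ≠ 0

/-- The restriction of a `G`-variety to an `H`-variety along a subgroup `H ⊆ G`. -/
def GVar.res {k : Type} [Field k] (X : GVar k G) (H : Subgroup G) : GVar k H where
  E := X.E
  act := X.act.comp H.subtype
  A := X.A
  fg := X.fg
  stable := fun g x hx => X.stable g x hx
  frac := X.frac

/-! ### Auxiliary density results -/

section Density

variable {k L : Type} [Field k] [Field L] [Algebra k L]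
variable {H' : Type} [Group H'] {G : Type} [Group G] [Finite G] {H : Subgroup G}
variable (act : H →* (L ≃ₐ[k] L))

/-- The `k`-submodule of `H`-equivariant vectors `G → L`. -/
def compatSet : Submodule k (G → L) where
  carrier := {c | ∀ (h : H) (x : G), c (↑h * x) = act h (c x)}
  add_mem' := by intro a b ha hb h x; simp [ha h x, hb h x]
  zero_mem' := by intro h x; simp
  smul_mem' := by
    intro t c hc h x
    simp only [Pi.smul_apply, hc h x, Algebra.smul_def]
    rw [map_mul, AlgEquiv.commutes]

theorem compat_span (hfaith : Function.Injective act) :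
    Submodule.span L ((compatSet act : Submodule k (G → L)) : Set (G → L)) = ⊤ := by
  classical
  have : Fintype G := Fintype.ofFinite G
  have : Fintype H := Fintype.ofFinite H
  rw [eq_top_iff]
  intro c _
  have hc : c = ∑ g : G, Pi.single g (c g) := by
    simp [Finset.univ_sum_single]
  rw [hc]
  refine Submodule.sum_mem _ fun g₀ _ => ?_
  set v := c g₀
  set mkk : G → Quotient (QuotientGroup.rightRel H) :=
    fun g => Quotient.mk (QuotientGroup.rightRel H) g with hmkk
  set r₀ := (mkk g₀).out with hr₀
  have hrel : ∀ {g : G}, mkk g = mkk g₀ → g * r₀⁻¹ ∈ H := by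
    intro g hg
    have h1 : g₀ * g⁻¹ ∈ H := QuotientGroup.rightRel_apply.mp (Quotient.exact hg)
    have h2 : g₀ * r₀⁻¹ ∈ H :=
      QuotientGroup.rightRel_apply.mp (Quotient.exact ((Quotient.out_eq (mkk g₀))))
    have he : g * r₀⁻¹ = (g₀ * g⁻¹)⁻¹ * (g₀ * r₀⁻¹) := by group
    rw [he]; exact mul_mem (inv_mem h1) h2
  -- the orbit functions
  set w : L → (G → L) := fun b g =>
    if hg : mkk g = mkk g₀ then act ⟨g * r₀⁻¹, hrel hg⟩ b else 0 with hw
  have hwmem : ∀ b, w b ∈ compatSet act := by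
    intro b h x
    have hmk : mkk (↑h * x) = mkk x := by
      refine Quotient.sound (QuotientGroup.rightRel_apply.mpr ?_)
      rw [show x * (↑h * x)⁻¹ = (↑h)⁻¹ from by group]
      exact inv_mem h.2
    by_cases hx : mkk x = mkk g₀
    · rw [hw]
      simp only [hmk.trans hx, hx, dif_pos]
      rw [show (⟨↑h * x * r₀⁻¹, hrel (hmk.trans hx)⟩ : H)
            = h * ⟨x * r₀⁻¹, hrel hx⟩ from Subtype.ext (by simp [mul_assoc])]
      rw [map_mul]; rfl
    · rw [hw]
      simp only [dif_neg hx, dif_neg (fun hcon => hx (hmk.symm.trans hcon))]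
      simp
  -- suffices to land in span of the `w b`
  have hsub : Set.range w ⊆ ((compatSet act : Submodule k (G → L)) : Set (G → L)) := by
    rintro _ ⟨b, rfl⟩; exact hwmem b
  refine Submodule.span_mono hsub ?_
  -- by contradiction, using a dual functional
  by_contra hn
  obtain ⟨f, hf0, hfbot⟩ :=
    Submodule.exists_dual_map_eq_bot_of_notMem hn inferInstance
  have hfW : ∀ b, f (w b) = 0 := by
    intro b
    have : f (w b) ∈ Submodule.map f (Submodule.span L (Set.range w)) :=
      Submodule.mem_map_of_mem (Submodule.subset_span ⟨b, rfl⟩)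
    rw [hfbot] at this
    exact (Submodule.mem_bot L).mp this
  -- expand f (w b) as a sum over the orbit
  have horbit : ∀ b, ∑ h : H, f (Pi.single (↑h * r₀) (1 : L)) • (act h b) = 0 := by
    intro b
    have hwb : w b = ∑ h : H, Pi.single (↑h * r₀) (act h b) := by
      funext g
      by_cases hg : mkk g = mkk g₀
      · rw [hw]
        simp only [dif_pos hg]
        rw [Finset.sum_apply]
        rw [Finset.sum_eq_single (⟨g * r₀⁻¹, hrel hg⟩ : H)]
        · rw [inv_mul_cancel_right, Pi.single_eq_same]
        · intro h _ hne
          apply Pi.single_eq_of_ne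
          intro hcon
          apply hne
          apply Subtype.ext
          show (h : G) = g * r₀⁻¹
          rw [hcon, mul_inv_cancel_right]
        · intro hcon
          exact absurd (Finset.mem_univ _) hcon
      · rw [hw]
        simp only [dif_neg hg]
        rw [Finset.sum_apply]
        refine (Finset.sum_eq_zero fun h _ => ?_).symm
        apply Pi.single_eq_of_ne
        intro hcon
        apply hg
        rw [hcon]
        refine (Quotient.sound (QuotientGroup.rightRel_apply.mpr ?_)).trans
          (Quotient.out_eq (mkk g₀))
        rw [show r₀ * (↑h * r₀)⁻¹ = (↑h)⁻¹ from by group]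
        exact inv_mem h.2
    have hsingle : ∀ (g : G) (a : L),
        (Pi.single g a : G → L) = a • (Pi.single g (1 : L) : G → L) := by
      intro g a
      funext t
      by_cases ht : t = g
      · subst ht; simp
      · simp [Pi.single_eq_of_ne ht]
    have := hfW b
    rw [hwb, map_sum] at this
    convert this using 2 with h
    rw [hsingle ((h : G) * r₀) (act h b), map_smul, smul_eq_mul, smul_eq_mul, mul_comm]
  -- Dedekind's independence of characters
  have hcoef : ∀ h : H, f (Pi.single (↑h * r₀) (1 : L)) = 0 := by
    set m : H → (L →* L) := fun h => ((act h : L ≃ₐ[k] L) : L ≃* L).toMonoidHom with hm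
    have hminj : Function.Injective m := by
      intro a b hab
      apply hfaith
      ext x
      exact DFunLike.congr_fun hab x
    have hli : LinearIndependent L (fun h : H => ((m h : L →* L) : L → L)) :=
      (linearIndependent_monoidHom L L).comp m hminj
    rw [Fintype.linearIndependent_iff] at hli
    intro h
    refine hli (fun h => f (Pi.single (↑h * r₀) (1 : L))) ?_ h
    funext b
    have := horbit b
    simp [Finset.sum_apply, hm]
    exact this
  -- conclude
  apply hf0
  have hg₀ : g₀ = ↑(⟨g₀ * r₀⁻¹, hrel rfl⟩ : H) * r₀ := by group
  have h1 : f (Pi.single g₀ (1 : L) : G → L) = 0 := by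
    have := hcoef ⟨g₀ * r₀⁻¹, hrel rfl⟩
    rwa [← hg₀] at this
  have hsingle : (Pi.single g₀ v : G → L) = v • (Pi.single g₀ (1 : L) : G → L) := by
    funext t
    by_cases ht : t = g₀
    · subst ht; simp
    · simp [Pi.single_eq_of_ne ht]
  rw [hsingle, map_smul, h1, smul_zero]

variable [CharZero k]

omit [Group G] [Finite G] in
theorem vanish_aux (W : Submodule k (G → L)) (D : MvPolynomial G L)
    (hW : ∀ c ∈ W, MvPolynomial.aeval c D = 0)
    (s : Finset (G → L)) (hs : ∀ u ∈ s, u ∈ W) (lam : (G → L) → L) :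
    ∀ c ∈ W, MvPolynomial.aeval (c + ∑ u ∈ s, lam u • u) D = 0 := by
  classical
  induction s using Finset.induction_on with
  | empty => intro c hc; simpa using hW c hc
  | @insert a s ha IH =>
    intro c hc
    have hsW : ∀ u ∈ s, u ∈ W := fun u hu => hs u (Finset.mem_insert_of_mem hu)
    have haW : a ∈ W := hs a (Finset.mem_insert_self a s)
    set P : Polynomial L := MvPolynomial.aeval
      (fun g => Polynomial.C ((c + ∑ u ∈ s, lam u • u) g) + Polynomial.C (a g) * Polynomial.X) D
      with hP
    have key : ∀ μ : L, Polynomial.eval μ P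
        = MvPolynomial.aeval (fun g => (c + ∑ u ∈ s, lam u • u) g + a g * μ) D := by
      intro μ
      rw [hP]
      rw [show (Polynomial.eval μ : Polynomial L → L) (MvPolynomial.aeval
          (fun g => Polynomial.C ((c + ∑ u ∈ s, lam u • u) g) + Polynomial.C (a g) * Polynomial.X) D)
        = (Polynomial.aeval μ : Polynomial L →ₐ[L] L) (MvPolynomial.aeval
          (fun g => Polynomial.C ((c + ∑ u ∈ s, lam u • u) g) + Polynomial.C (a g) * Polynomial.X) D)
        from rfl]
      rw [MvPolynomial.comp_aeval_apply]
      refine congrArg (fun f : G → L => MvPolynomial.aeval f D) ?_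
      funext g
      simp only [map_add, map_mul, Polynomial.aeval_C, Polynomial.aeval_X,
        Algebra.algebraMap_self, RingHom.id_apply]
    have hroots : ∀ t : k, Polynomial.eval (algebraMap k L t) P = 0 := by
      intro t
      rw [key]
      have hmem : c + algebraMap k L t • a ∈ W := by
        have : algebraMap k L t • a = t • a := by
          funext g; simp [Algebra.smul_def]
        rw [this]
        exact W.add_mem hc (W.smul_mem t haW)
      have hIH := IH hsW (c + algebraMap k L t • a) hmem
      have hveq : (fun g => (c + ∑ u ∈ s, lam u • u) g + a g * algebraMap k L t)
          = (c + algebraMap k L t • a + ∑ u ∈ s, lam u • u) := by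
        funext g
        simp only [Pi.add_apply, Pi.smul_apply, Finset.sum_apply, smul_eq_mul]
        ring
      rw [hveq]
      exact hIH
    have hP0 : P = 0 := by
      apply Polynomial.eq_zero_of_infinite_isRoot
      apply Set.Infinite.mono (s := Set.range (algebraMap k L))
      · rintro _ ⟨t, rfl⟩
        exact hroots t
      · exact Set.infinite_range_of_injective (algebraMap k L).injective
    have := key (lam a)
    rw [hP0] at this
    simp only [Polynomial.eval_zero] at this
    rw [Finset.sum_insert ha]
    rw [show c + (lam a • a + ∑ u ∈ s, lam u • u)
        = (fun g => (c + ∑ u ∈ s, lam u • u) g + a g * lam a) from by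
      funext g
      simp only [Pi.add_apply, Pi.smul_apply, Finset.sum_apply, smul_eq_mul]
      ring]
    exact this.symm

omit [Group G] [Finite G] in
theorem density (W : Submodule k (G → L))
    (hspan : Submodule.span L (W : Set (G → L)) = ⊤)
    (D : MvPolynomial G k) (hD : D ≠ 0) :
    ∃ c ∈ W, MvPolynomial.aeval c D ≠ 0 := by
  classical
  by_contra hcon
  push_neg at hcon
  have hL : Infinite L := Infinite.of_injective (algebraMap k L) (algebraMap k L).injective
  set D' : MvPolynomial G L := MvPolynomial.map (algebraMap k L) D with hD'
  have hWv : ∀ c ∈ W, MvPolynomial.aeval c D' = 0 := by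
    intro c hc
    rw [hD', MvPolynomial.aeval_map_algebraMap]
    exact hcon c hc
  have hall : ∀ c : G → L, MvPolynomial.aeval c D' = 0 := by
    intro c
    have hcmem : c ∈ Submodule.span L (W : Set (G → L)) := by rw [hspan]; trivial
    obtain ⟨l, hlsupp, rfl⟩ := Submodule.mem_span_set.mp hcmem
    have heq : (l.sum fun mi r => r • mi) = (0 : G → L) + ∑ u ∈ l.support, l u • u := by
      rw [zero_add, Finsupp.sum]
    rw [heq]
    exact vanish_aux W D' hWv l.support (fun u hu => hlsupp hu) l 0 W.zero_mem
  have hzero : D' = 0 := by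
    apply MvPolynomial.funext
    intro x
    rw [map_zero, ← MvPolynomial.coe_aeval_eq_eval]
    exact hall x
  have : D = 0 := by
    have hinj : Function.Injective (MvPolynomial.map (algebraMap k L) :
        MvPolynomial G k → MvPolynomial G L) :=
      MvPolynomial.map_injective _ (algebraMap k L).injective
    apply hinj
    rw [← hD', hzero, map_zero]
  exact hD this

end Density

/-! ### The regular representation `G`-variety -/

section AuxVar

variable (k : Type) [Field k] (G : Type) [Group G] [Finite G]

/-- Function field of the regular representation of `G`. -/
abbrev AuxField := FractionRing (MvPolynomial G k)

lemma auxField_ext {f g : AuxField k G ≃ₐ[k] AuxField k G}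
    (h : ∀ r : MvPolynomial G k,
      f (algebraMap (MvPolynomial G k) (AuxField k G) r)
        = g (algebraMap (MvPolynomial G k) (AuxField k G) r)) : f = g := by
  apply AlgEquiv.ext
  intro x
  obtain ⟨a, b, -, rfl⟩ := IsFractionRing.div_surjective (A := MvPolynomial G k) x
  rw [map_div₀, map_div₀, h a, h b]

/-- The `G`-action on `AuxField` permuting the variables. -/
def auxEquiv (g : G) : AuxField k G ≃ₐ[k] AuxField k G :=
  IsFractionRing.algEquivOfAlgEquiv (MvPolynomial.renameEquiv k (Equiv.mulLeft g))

lemma auxEquiv_algebraMap (g : G) (p : MvPolynomial G k) :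
    auxEquiv k G g (algebraMap (MvPolynomial G k) (AuxField k G) p)
      = algebraMap (MvPolynomial G k) (AuxField k G)
          (MvPolynomial.rename (fun x => g * x) p) := by
  rw [auxEquiv, IsFractionRing.algEquivOfAlgEquiv_algebraMap]
  rfl

/-- The `G`-action as a monoid hom. -/
def auxAct : G →* (AuxField k G ≃ₐ[k] AuxField k G) where
  toFun := auxEquiv k G
  map_one' := by
    apply auxField_ext
    intro r
    rw [auxEquiv_algebraMap]
    have : (fun x : G => (1 : G) * x) = id := by funext x; simp
    rw [this, MvPolynomial.rename_id]
    rfl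
  map_mul' := fun g g' => by
    apply auxField_ext
    intro r
    rw [auxEquiv_algebraMap]
    have : (auxEquiv k G g * auxEquiv k G g')
        (algebraMap (MvPolynomial G k) (AuxField k G) r)
        = auxEquiv k G g (auxEquiv k G g'
            (algebraMap (MvPolynomial G k) (AuxField k G) r)) := rfl
    rw [this, auxEquiv_algebraMap, auxEquiv_algebraMap, MvPolynomial.rename_rename]
    congr 1
    apply congrArg (fun f => MvPolynomial.rename f r)
    funext x
    simp [mul_assoc]

/-- The regular representation as a `GVar`. -/
@[reducible] def auxVar : GVar k G where
  E := AuxField k G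
  act := auxAct k G
  A := (IsScalarTower.toAlgHom k (MvPolynomial G k) (AuxField k G)).range
  fg := by
    rw [← Algebra.map_top]
    exact Subalgebra.FG.map _ (inferInstance : Algebra.FiniteType k (MvPolynomial G k)).out
  stable := by
    rintro g x ⟨p, rfl⟩
    exact ⟨MvPolynomial.rename (fun x => g * x) p, (auxEquiv_algebraMap k G g p).symm⟩
  frac := by
    intro x
    obtain ⟨a, b, hb, rfl⟩ := IsFractionRing.div_surjective (A := MvPolynomial G k) x
    exact ⟨algebraMap _ _ a, ⟨a, rfl⟩, algebraMap _ _ b, ⟨b, rfl⟩,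
      IsFractionRing.to_map_ne_zero_of_mem_nonZeroDivisors hb, rfl⟩

lemma auxVar_faithful : (auxVar k G).Faithful := by
  rw [GVar.Faithful, injective_iff_map_eq_one]
  intro g hg
  have h1 : (auxVar k G).act g
      (algebraMap (MvPolynomial G k) (AuxField k G) (MvPolynomial.X (1 : G)))
      = algebraMap (MvPolynomial G k) (AuxField k G) (MvPolynomial.X (1 : G)) := by
    rw [hg]; rfl
  have h2 : (auxVar k G).act g
      (algebraMap (MvPolynomial G k) (AuxField k G) (MvPolynomial.X (1 : G)))
      = algebraMap (MvPolynomial G k) (AuxField k G) (MvPolynomial.X (g * 1)) := by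
    show auxEquiv k G g _ = _
    rw [auxEquiv_algebraMap, MvPolynomial.rename_X]
  rw [h2] at h1
  have h3 := IsFractionRing.injective (MvPolynomial G k) (AuxField k G) h1
  have h4 := MvPolynomial.X_injective h3
  simpa using h4

end AuxVar

set_option maxHeartbeats 2000000 in
/-- Let `G` be a finite group, `X` a versal `G`-variety over a characteristic-zero field,
and `H ⊆ G` a subgroup.  Then `X` is also a versal `H`-variety. -/
theorem isVersal_res (k : Type) [Field k] [CharZero k]
    (G : Type) [Group G] [Finite G] (X : GVar k G) (hX : X.IsVersal)
    (H : Subgroup G) :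
    (X.res H).IsVersal := by
  classical
  obtain ⟨hXf, hXv⟩ := hX
  constructor
  · -- faithfulness of the restricted action
    intro a b hab
    exact H.subtype_injective (hXf hab)
  · intro S hSA hstab hex Y hY
    -- saturate `S` to a `G`-stable set
    set S' : Set X.E := {x | ∃ g : G, ∃ s ∈ S, x = X.act g s} with hS'
    have hS'A : S' ⊆ (X.A : Set X.E) := by
      rintro x ⟨g, s, hs, rfl⟩
      exact X.stable g s (hSA hs)
    have hstab' : ∀ g : G, ∀ x ∈ S', X.act g x ∈ S' := by
      rintro g x ⟨g', s, hs, rfl⟩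
      refine ⟨g * g', s, hs, ?_⟩
      rw [map_mul]; rfl
    have hex' : ∃ s ∈ S', s ≠ 0 := by
      obtain ⟨s, hs, hs0⟩ := hex
      exact ⟨s, ⟨1, s, hs, by rw [map_one]; rfl⟩, hs0⟩
    obtain ⟨ψ', hψeq, s'0, hs'0, hψne⟩ :=
      hXv S' hS'A hstab' hex' (auxVar k G) (auxVar_faithful k G)
    obtain ⟨g₀, s₀, hs₀, hs'eq⟩ := hs'0
    have hs₀A : s₀ ∈ X.A := hSA hs₀
    -- `ψ'` does not vanish at `s₀` itself
    have hψs₀ : ψ' ⟨s₀, hs₀A⟩ ≠ 0 := by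
      intro h0
      apply hψne
      have heq2 := hψeq g₀ ⟨s₀, hs₀A⟩
      have heq1 : (⟨s'0, hS'A ⟨g₀, s₀, hs₀, hs'eq⟩⟩ : X.A)
          = ⟨X.act g₀ s₀, X.stable g₀ s₀ hs₀A⟩ := Subtype.ext hs'eq
      rw [heq1, heq2, h0, map_zero]
    -- choose fraction representations for all elements of `X.A`
    have hrep : ∀ a : X.A, ∃ pq : MvPolynomial G k × MvPolynomial G k, pq.2 ≠ 0 ∧
        ψ' a * algebraMap (MvPolynomial G k) (AuxField k G) pq.2
          = algebraMap (MvPolynomial G k) (AuxField k G) pq.1 := by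
      intro a
      obtain ⟨p, q, hq, heq⟩ := IsFractionRing.div_surjective (A := MvPolynomial G k) (ψ' a)
      refine ⟨(p, q), nonZeroDivisors.ne_zero hq, ?_⟩
      have hq0 : algebraMap (MvPolynomial G k) (AuxField k G) q ≠ 0 :=
        IsFractionRing.to_map_ne_zero_of_mem_nonZeroDivisors hq
      rw [← heq, div_mul_cancel₀ _ hq0]
    choose rep hrepne hrepeq using hrep
    obtain ⟨t, ht⟩ := X.fg
    have htA : ∀ a ∈ t, a ∈ X.A := by
      intro a ha
      rw [← ht]
      exact Algebra.subset_adjoin ha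
    -- the polynomial that must not vanish at the specialization point
    set D : MvPolynomial G k := (rep ⟨s₀, hs₀A⟩).1 * (rep ⟨s₀, hs₀A⟩).2 *
        ∏ a ∈ t.attach, (rep ⟨a.1, htA a.1 a.2⟩).2 with hD
    have hιinj := IsFractionRing.injective (MvPolynomial G k) (AuxField k G)
    have hp₀ : (rep ⟨s₀, hs₀A⟩).1 ≠ 0 := by
      intro h0
      apply hψs₀
      have hq0 : algebraMap (MvPolynomial G k) (AuxField k G) (rep ⟨s₀, hs₀A⟩).2 ≠ 0 := by
        intro hc
        exact hrepne ⟨s₀, hs₀A⟩ (hιinj (hc.trans (map_zero _).symm))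
      have heq := hrepeq ⟨s₀, hs₀A⟩
      rw [h0, map_zero] at heq
      rcases mul_eq_zero.mp heq with h | h
      · exact h
      · exact absurd h hq0
    have hD0 : D ≠ 0 := by
      refine mul_ne_zero (mul_ne_zero hp₀ (hrepne _)) ?_
      exact Finset.prod_ne_zero_iff.mpr fun a _ => hrepne _
    -- an `H`-equivariant point avoiding the vanishing locus of `D`
    obtain ⟨c, hcW, hcD⟩ := density (compatSet Y.act) (compat_span Y.act hY) D hD0
    set ev : MvPolynomial G k →ₐ[k] Y.E := MvPolynomial.aeval c with hev
    have hevD : ev D ≠ 0 := hcD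
    have hev₁ : ev (rep ⟨s₀, hs₀A⟩).1 ≠ 0 := by
      intro h; apply hevD; rw [hD, map_mul, map_mul, h, zero_mul, zero_mul]
    have hev₂ : ev (rep ⟨s₀, hs₀A⟩).2 ≠ 0 := by
      intro h; apply hevD; rw [hD, map_mul, map_mul, h, mul_zero, zero_mul]
    have hevt : ∀ (a) (ha : a ∈ t), ev (rep ⟨a, htA a ha⟩).2 ≠ 0 := by
      intro a ha h
      apply hevD
      rw [hD, map_mul, map_prod]
      refine mul_eq_zero_of_right _ ?_
      exact Finset.prod_eq_zero (Finset.mem_attach t ⟨a, ha⟩) h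
    -- equivariance of the evaluation
    have hevS : ∀ (h : H) (r : MvPolynomial G k),
        ev (MvPolynomial.rename (fun x => (h : G) * x) r) = Y.act h (ev r) := by
      intro h r
      rw [hev]
      rw [MvPolynomial.aeval_rename]
      have h6 := MvPolynomial.comp_aeval_apply (f := c) ((Y.act h).toAlgHom) r
      have hcc : (c ∘ fun x => (h : G) * x) = fun i => (Y.act h).toAlgHom (c i) :=
        funext fun x => hcW h x
      rw [hcc, ← h6]
      rfl
    -- well-defined evaluation on fractions
    have hwd : ∀ (x : AuxField k G) (p q p' q' : MvPolynomial G k), ev q ≠ 0 → ev q' ≠ 0 →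
        x * algebraMap (MvPolynomial G k) (AuxField k G) q
          = algebraMap (MvPolynomial G k) (AuxField k G) p →
        x * algebraMap (MvPolynomial G k) (AuxField k G) q'
          = algebraMap (MvPolynomial G k) (AuxField k G) p' →
        ev p / ev q = ev p' / ev q' := by
      intro x p q p' q' hq hq' h1 h2
      have hpq : p * q' = p' * q := by
        apply hιinj
        rw [map_mul, map_mul, ← h1, ← h2]; ring
      rw [div_eq_div_iff hq hq', ← map_mul, ← map_mul, hpq]
    set eL : AuxField k G → Y.E := fun x =>
      if hx : ∃ pq : MvPolynomial G k × MvPolynomial G k, ev pq.2 ≠ 0 ∧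
          x * algebraMap (MvPolynomial G k) (AuxField k G) pq.2
            = algebraMap (MvPolynomial G k) (AuxField k G) pq.1
      then ev hx.choose.1 / ev hx.choose.2 else 0 with heL
    have hespec : ∀ (x : AuxField k G) (p q : MvPolynomial G k), ev q ≠ 0 →
        x * algebraMap (MvPolynomial G k) (AuxField k G) q
          = algebraMap (MvPolynomial G k) (AuxField k G) p →
        eL x = ev p / ev q := by
      intro x p q hq hx
      have hpred : ∃ pq : MvPolynomial G k × MvPolynomial G k, ev pq.2 ≠ 0 ∧
          x * algebraMap (MvPolynomial G k) (AuxField k G) pq.2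
            = algebraMap (MvPolynomial G k) (AuxField k G) pq.1 := ⟨(p, q), hq, hx⟩
      rw [heL]
      simp only [dif_pos hpred]
      exact hwd x _ _ p q hpred.choose_spec.1 hq hpred.choose_spec.2 hx
    -- every element of `ψ'(X.A)` admits a representation with nonvanishing denominator
    have hmem : ∀ (x : X.E) (hx : x ∈ X.A), ∃ pq : MvPolynomial G k × MvPolynomial G k,
        ev pq.2 ≠ 0 ∧ ψ' ⟨x, hx⟩ * algebraMap (MvPolynomial G k) (AuxField k G) pq.2
          = algebraMap (MvPolynomial G k) (AuxField k G) pq.1 := by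
      intro x hx
      have hx' : x ∈ Algebra.adjoin k (↑t : Set X.E) := by rw [ht]; exact hx
      revert hx
      refine Algebra.adjoin_induction
        (p := fun y _ => ∀ h2 : y ∈ X.A, ∃ pq : MvPolynomial G k × MvPolynomial G k,
          ev pq.2 ≠ 0 ∧ ψ' ⟨y, h2⟩ * algebraMap (MvPolynomial G k) (AuxField k G) pq.2
            = algebraMap (MvPolynomial G k) (AuxField k G) pq.1)
        ?_ ?_ ?_ ?_ hx'
      · intro a ha h2
        exact ⟨rep ⟨a, h2⟩, hevt a ha, hrepeq ⟨a, h2⟩⟩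
      · intro r h2
        refine ⟨(MvPolynomial.C r, 1), by simp, ?_⟩
        have h4 : ψ' ⟨algebraMap k X.E r, h2⟩ = algebraMap k (AuxField k G) r :=
          (congrArg ψ' (rfl : (⟨algebraMap k X.E r, h2⟩ : X.A) = algebraMap k X.A r)).trans
            (AlgHom.commutes ψ' r)
        rw [h4, map_one, mul_one,
          IsScalarTower.algebraMap_apply k (MvPolynomial G k) (AuxField k G)]
        congr 1
      · intro u v hu hv pu pv h2
        have huA : u ∈ X.A := by rw [← ht]; exact hu
        have hvA : v ∈ X.A := by rw [← ht]; exact hv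
        obtain ⟨⟨p, q⟩, hq, hpq⟩ := pu huA
        obtain ⟨⟨p', q'⟩, hq', hpq'⟩ := pv hvA
        refine ⟨(p * q' + p' * q, q * q'), by rw [map_mul]; exact mul_ne_zero hq hq', ?_⟩
        have hsplit : (⟨u + v, h2⟩ : X.A) = ⟨u, huA⟩ + ⟨v, hvA⟩ := rfl
        rw [hsplit, map_add, map_add, map_mul, map_mul, map_mul]
        rw [show (ψ' ⟨u, huA⟩ + ψ' ⟨v, hvA⟩)
              * (algebraMap (MvPolynomial G k) (AuxField k G) q
                  * algebraMap (MvPolynomial G k) (AuxField k G) q')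
            = (ψ' ⟨u, huA⟩ * algebraMap (MvPolynomial G k) (AuxField k G) q)
                * algebraMap (MvPolynomial G k) (AuxField k G) q'
              + (ψ' ⟨v, hvA⟩ * algebraMap (MvPolynomial G k) (AuxField k G) q')
                * algebraMap (MvPolynomial G k) (AuxField k G) q from by ring]
        rw [hpq, hpq']
      · intro u v hu hv pu pv h2
        have huA : u ∈ X.A := by rw [← ht]; exact hu
        have hvA : v ∈ X.A := by rw [← ht]; exact hv
        obtain ⟨⟨p, q⟩, hq, hpq⟩ := pu huA
        obtain ⟨⟨p', q'⟩, hq', hpq'⟩ := pv hvA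
        refine ⟨(p * p', q * q'), by rw [map_mul]; exact mul_ne_zero hq hq', ?_⟩
        have hsplit : (⟨u * v, h2⟩ : X.A) = ⟨u, huA⟩ * ⟨v, hvA⟩ := rfl
        rw [hsplit, map_mul, map_mul, map_mul]
        rw [show ψ' ⟨u, huA⟩ * ψ' ⟨v, hvA⟩
              * (algebraMap (MvPolynomial G k) (AuxField k G) q
                  * algebraMap (MvPolynomial G k) (AuxField k G) q')
            = (ψ' ⟨u, huA⟩ * algebraMap (MvPolynomial G k) (AuxField k G) q)
                * (ψ' ⟨v, hvA⟩ * algebraMap (MvPolynomial G k) (AuxField k G) q') from by ring]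
        rw [hpq, hpq']
    have hmemA : ∀ a : X.A, ∃ p q : MvPolynomial G k,
        ev q ≠ 0 ∧ ψ' a * algebraMap (MvPolynomial G k) (AuxField k G) q
          = algebraMap (MvPolynomial G k) (AuxField k G) p := by
      intro a
      obtain ⟨⟨p, q⟩, h1, h2⟩ := hmem a.1 a.2
      exact ⟨p, q, h1, h2⟩
    -- assemble the algebra homomorphism
    refine ⟨{ toFun := fun a => eL (ψ' a),
              map_one' := ?_,
              map_mul' := ?_,
              map_zero' := ?_,
              map_add' := ?_,
              commutes' := ?_ }, ?_, ?_⟩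
    · show eL (ψ' 1) = 1
      rw [map_one, hespec 1 1 1 (by simp) (by simp)]
      simp
    · intro a b
      show eL (ψ' (a * b)) = eL (ψ' a) * eL (ψ' b)
      obtain ⟨p, q, hq, hpq⟩ := hmemA a
      obtain ⟨p', q', hq', hpq'⟩ := hmemA b
      rw [show ψ' (a * b) = ψ' a * ψ' b from map_mul ψ' a b]
      rw [hespec (ψ' a * ψ' b) (p * p') (q * q')
        (by rw [map_mul]; exact mul_ne_zero hq hq')
        (by
          rw [map_mul, map_mul]
          rw [show ψ' a * ψ' b * (algebraMap (MvPolynomial G k) (AuxField k G) q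
              * algebraMap (MvPolynomial G k) (AuxField k G) q')
            = (ψ' a * algebraMap (MvPolynomial G k) (AuxField k G) q)
              * (ψ' b * algebraMap (MvPolynomial G k) (AuxField k G) q') from by ring]
          rw [hpq, hpq'])]
      rw [hespec _ p q hq hpq, hespec _ p' q' hq' hpq', div_mul_div_comm, map_mul, map_mul]
    · show eL (ψ' 0) = 0
      rw [map_zero, hespec 0 0 1 (by simp) (by simp)]
      simp
    · intro a b
      show eL (ψ' (a + b)) = eL (ψ' a) + eL (ψ' b)
      obtain ⟨p, q, hq, hpq⟩ := hmemA a
      obtain ⟨p', q', hq', hpq'⟩ := hmemA b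
      rw [show ψ' (a + b) = ψ' a + ψ' b from map_add ψ' a b]
      rw [hespec (ψ' a + ψ' b) (p * q' + p' * q) (q * q')
        (by rw [map_mul]; exact mul_ne_zero hq hq')
        (by
          rw [map_mul, map_add, map_mul, map_mul]
          rw [show (ψ' a + ψ' b) * (algebraMap (MvPolynomial G k) (AuxField k G) q
              * algebraMap (MvPolynomial G k) (AuxField k G) q')
            = (ψ' a * algebraMap (MvPolynomial G k) (AuxField k G) q)
                * algebraMap (MvPolynomial G k) (AuxField k G) q'
              + (ψ' b * algebraMap (MvPolynomial G k) (AuxField k G) q')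
                * algebraMap (MvPolynomial G k) (AuxField k G) q from by ring]
          rw [hpq, hpq'])]
      rw [hespec _ p q hq hpq, hespec _ p' q' hq' hpq', map_add, map_mul, map_mul, map_mul,
        div_add_div _ _ hq hq']
      congr 1
      ring
    · intro r
      show eL (ψ' (algebraMap k X.A r)) = algebraMap k Y.E r
      rw [AlgHom.commutes]
      rw [hespec (algebraMap k (AuxField k G) r) (MvPolynomial.C r) 1 (by simp)
        (by
          rw [map_one, mul_one, IsScalarTower.algebraMap_apply k (MvPolynomial G k)
              (AuxField k G)]
          congr 1)]
      rw [MvPolynomial.aeval_C]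
      simp
    · -- equivariance
      intro h a
      show eL (ψ' ⟨X.act (↑h : G) a.1, X.stable (↑h : G) a.1 a.2⟩) = Y.act h (eL (ψ' a))
      rw [hψeq (↑h : G) a]
      obtain ⟨p, q, hq, hpq⟩ := hmemA a
      have hq2 : ev (MvPolynomial.rename (fun x => (↑h : G) * x) q) ≠ 0 := by
        rw [hevS h q]
        intro h0
        exact hq ((Y.act h).injective (h0.trans (map_zero (Y.act h)).symm))
      have hrep2 : (auxVar k G).act (↑h : G) (ψ' a)
          * algebraMap (MvPolynomial G k) (AuxField k G)
              (MvPolynomial.rename (fun x => (↑h : G) * x) q)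
          = algebraMap (MvPolynomial G k) (AuxField k G)
              (MvPolynomial.rename (fun x => (↑h : G) * x) p) := by
        have h5 := congrArg ((auxVar k G).act (↑h : G)) hpq
        rw [map_mul] at h5
        rw [show ((auxVar k G).act (↑h : G)) (algebraMap (MvPolynomial G k) (AuxField k G) q)
            = algebraMap (MvPolynomial G k) (AuxField k G)
                (MvPolynomial.rename (fun x => (↑h : G) * x) q)
          from auxEquiv_algebraMap k G (↑h : G) q] at h5
        rw [show ((auxVar k G).act (↑h : G)) (algebraMap (MvPolynomial G k) (AuxField k G) p)
            = algebraMap (MvPolynomial G k) (AuxField k G)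
                (MvPolynomial.rename (fun x => (↑h : G) * x) p)
          from auxEquiv_algebraMap k G (↑h : G) p] at h5
        exact h5
      rw [hespec _ _ _ hq2 hrep2, hespec _ p q hq hpq, hevS h p, hevS h q, map_div₀]
    · -- nonvanishing at `s₀`
      refine ⟨s₀, hs₀, ?_⟩
      show eL (ψ' ⟨s₀, hSA hs₀⟩) ≠ 0
      rw [hespec _ _ _ hev₂ (hrepeq ⟨s₀, hs₀A⟩)]
      exact div_ne_zero hev₁ hev₂

end
end

section
/- Let G be a finite group, Y a versal G-variety, and X a faithful G-variety. If there exists a G-equivariant dominant rational map Y ⇢ X, then X is versal. -/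
noncomputable section

variable {G : Type} [Group G]

/-- Let `G` be a finite group, `Y` a versal `G`-variety over a characteristic-zero field,
and `X` a faithful `G`-variety.  If there is a `G`-equivariant dominant rational map
`Y ⇢ X` (equivalently, a `G`-equivariant `k`-embedding of function fields
`k(X) → k(Y)`), then `X` is versal. -/
theorem isVersal_of_dominant (k : Type) [Field k] [CharZero k]
    (G : Type) [Group G] [Finite G] (Y X : GVar k G)
    (hY : Y.IsVersal) (hX : X.Faithful)
    (j : X.E →ₐ[k] Y.E)
    (hj : ∀ (g : G) (x : X.E), j (X.act g x) = Y.act g (j x)) :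
    X.IsVersal := by
  classical
  have _ : Fintype G := Fintype.ofFinite G
  refine ⟨hX, ?_⟩
  intro S hSA hSst hSne Z hZ
  obtain ⟨s₀, hs₀S, hs₀ne⟩ := hSne
  obtain ⟨t, ht⟩ := X.fg
  -- choose fraction representations of j x for every x
  have hfrac : ∀ x : X.E, ∃ a : Y.A, ∃ b : Y.A, (b : Y.E) ≠ 0 ∧ j x = a / b := by
    intro x
    obtain ⟨a, ha, b, hb, hbne, hx⟩ := Y.frac (j x)
    exact ⟨⟨a, ha⟩, ⟨b, hb⟩, hbne, hx⟩
  choose num den hden hnd using hfrac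
  have hjinj : Function.Injective j := j.toRingHom.injective
  have hnum0 : (num s₀ : Y.E) ≠ 0 := by
    intro h
    apply hs₀ne
    apply hjinj
    rw [map_zero, hnd s₀, h, zero_div]
  -- the key element c and its "norm" N
  set Qa : Y.A := ∏ x ∈ t, den x with hQa
  set c : Y.A := Qa * num s₀ * den s₀ with hc
  have hc0 : (c : Y.E) ≠ 0 := by
    have hQ0 : (Qa : Y.E) ≠ 0 := by
      have h : (Qa : Y.E) = ∏ x ∈ t, (den x : Y.E) := by push_cast [hQa]; rfl
      rw [h]
      exact Finset.prod_ne_zero_iff.2 fun x _ => hden x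
    push_cast [hc]
    exact mul_ne_zero (mul_ne_zero hQ0 hnum0) (hden s₀)
  set N : Y.A := ∏ g : G, ⟨Y.act g c, Y.stable g c c.2⟩ with hN
  have hNcoe : (N : Y.E) = ∏ g : G, Y.act g (c : Y.E) := by push_cast [hN]; rfl
  have hN0 : (N : Y.E) ≠ 0 := by
    rw [hNcoe]
    refine Finset.prod_ne_zero_iff.2 fun g _ h => hc0 ?_
    exact (Y.act g).injective (h.trans (map_zero (Y.act g)).symm)
  have hstab : ∀ g : G, ∀ x ∈ ({(N : Y.E)} : Set Y.E), Y.act g x ∈ ({(N : Y.E)} : Set Y.E) := by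
    intro g x hx
    rw [Set.mem_singleton_iff] at hx ⊢
    subst hx
    rw [hNcoe, map_prod]
    calc (∏ g' : G, Y.act g (Y.act g' (c:Y.E)))
        = ∏ g' : G, Y.act (g * g') (c:Y.E) := by
          refine Finset.prod_congr rfl fun g' _ => ?_
          rw [map_mul, AlgEquiv.mul_apply]
      _ = ∏ g' : G, Y.act g' (c:Y.E) :=
          Equiv.prod_comp (Equiv.mulLeft g) fun g' => Y.act g' (c:Y.E)
  obtain ⟨ψ, hψeq, s, hsS', hψs⟩ :=
    hY.2 {(N : Y.E)} (by rintro x rfl; exact N.2) hstab ⟨N, rfl, hN0⟩ Z hZ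
  rw [Set.mem_singleton_iff] at hsS'
  subst hsS'
  have hψN : ψ N ≠ 0 := by rwa [Subtype.coe_eta] at hψs
  -- ψ doesn't vanish on c, hence not on any of the chosen denominators
  have hψfac : ∀ g : G, ψ ⟨Y.act g c, Y.stable g c c.2⟩ ≠ 0 := by
    rw [hN, map_prod] at hψN
    exact fun g => Finset.prod_ne_zero_iff.1 hψN g (Finset.mem_univ g)
  have hψc : ψ c ≠ 0 := by
    have h1 := hψfac 1
    have h : (⟨Y.act 1 c, Y.stable 1 c c.2⟩ : Y.A) = c := by
      apply Subtype.ext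
      simp
    rwa [h] at h1
  have hψQ : ψ Qa ≠ 0 := fun h => hψc (by rw [hc, map_mul, map_mul, h, zero_mul, zero_mul])
  have hψnum : ψ (num s₀) ≠ 0 := fun h => hψc (by rw [hc, map_mul, map_mul, h, mul_zero, zero_mul])
  have hψq : ψ (den s₀) ≠ 0 := fun h => hψc (by rw [hc, map_mul, h, mul_zero])
  have hψden : ∀ x ∈ t, ψ (den x) ≠ 0 := by
    rw [hQa, map_prod] at hψQ
    exact fun x hx => Finset.prod_ne_zero_iff.1 hψQ x hx
  have hcoe0 : ∀ b : Y.A, ψ b ≠ 0 → (b : Y.E) ≠ 0 := by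
    intro b hb h
    exact hb (by rw [show b = 0 from Subtype.ext h, map_zero])
  -- the domain of the extension of ψ, and the extension F itself
  set P : Y.E → Prop := fun x => ∃ a b : Y.A, ψ b ≠ 0 ∧ x = (a : Y.E) / b with hP
  set F : Y.E → Z.E := fun x =>
    if h : P x then ψ h.choose / ψ h.choose_spec.choose else 0 with hF
  have wd : ∀ a b a' b' : Y.A, ψ b ≠ 0 → ψ b' ≠ 0 →
      (a : Y.E) / b = (a' : Y.E) / b' → ψ a / ψ b = ψ a' / ψ b' := by
    intro a b a' b' hb hb' h
    have key : (a : Y.E) * b' = (a' : Y.E) * b :=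
      (div_eq_div_iff (hcoe0 b hb) (hcoe0 b' hb')).1 h
    have keyA : a * b' = a' * b := Subtype.ext (by push_cast; exact key)
    refine (div_eq_div_iff hb hb').2 ?_
    rw [← map_mul, ← map_mul, keyA]
  have Fspec : ∀ (x : Y.E) (a b : Y.A), ψ b ≠ 0 → x = (a : Y.E) / b → F x = ψ a / ψ b := by
    intro x a b hb hx
    have hPx : P x := ⟨a, b, hb, hx⟩
    rw [hF]
    simp only [dif_pos hPx]
    obtain ⟨hb', hx'⟩ := hPx.choose_spec.choose_spec
    exact wd _ _ _ _ hb' hb (hx'.symm.trans hx)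
  -- everything in j '' X.A is in the domain of F
  have hPj : ∀ a ∈ X.A, P (j a) := by
    intro a ha
    rw [← ht] at ha
    induction ha using Algebra.adjoin_induction with
    | mem x hx => exact ⟨num x, den x, hψden x hx, hnd x⟩
    | algebraMap r =>
        refine ⟨⟨algebraMap k Y.E r, Subalgebra.algebraMap_mem _ r⟩, 1, ?_, ?_⟩
        · rw [map_one]; exact one_ne_zero
        · rw [AlgHom.commutes]
          push_cast
          rw [div_one]
    | add x y hx hy hPx hPy =>
        obtain ⟨a1, b1, hb1, he1⟩ := hPx
        obtain ⟨a2, b2, hb2, he2⟩ := hPy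
        refine ⟨a1 * b2 + a2 * b1, b1 * b2, by rw [map_mul]; exact mul_ne_zero hb1 hb2, ?_⟩
        have hb1E := hcoe0 b1 hb1
        have hb2E := hcoe0 b2 hb2
        rw [map_add, he1, he2]
        push_cast
        field_simp
    | mul x y hx hy hPx hPy =>
        obtain ⟨a1, b1, hb1, he1⟩ := hPx
        obtain ⟨a2, b2, hb2, he2⟩ := hPy
        refine ⟨a1 * a2, b1 * b2, by rw [map_mul]; exact mul_ne_zero hb1 hb2, ?_⟩
        rw [map_mul, he1, he2]
        push_cast
        field_simp
  -- the pieces of the algebra homomorphism X.A → Z.E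
  have hone : ψ (1 : Y.A) ≠ 0 := by rw [map_one]; exact one_ne_zero
  have key_one : F (j ((1 : X.A) : X.E)) = 1 := by
    have h2 : j ((1 : X.A) : X.E) = ((1 : Y.A) : Y.E) / ((1 : Y.A) : Y.E) := by
      simp
    rw [Fspec _ _ _ hone h2, map_one, div_one]
  have key_zero : F (j ((0 : X.A) : X.E)) = 0 := by
    have h2 : j ((0 : X.A) : X.E) = ((0 : Y.A) : Y.E) / ((1 : Y.A) : Y.E) := by
      push_cast
      rw [map_zero, zero_div]
    rw [Fspec _ _ _ hone h2, map_zero, zero_div]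
  have key_mul : ∀ a b : X.A, F (j ((a * b : X.A) : X.E)) = F (j (a : X.E)) * F (j (b : X.E)) := by
    intro a b
    obtain ⟨a1, b1, hb1, he1⟩ := hPj a a.2
    obtain ⟨a2, b2, hb2, he2⟩ := hPj b b.2
    have hbb : ψ (b1 * b2) ≠ 0 := by rw [map_mul]; exact mul_ne_zero hb1 hb2
    have h3 : j ((a * b : X.A) : X.E) = ((a1 * a2 : Y.A) : Y.E) / ((b1 * b2 : Y.A) : Y.E) := by
      push_cast
      rw [map_mul, he1, he2]
      field_simp
    rw [Fspec _ _ _ hbb h3, Fspec _ _ _ hb1 he1, Fspec _ _ _ hb2 he2,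
      map_mul, map_mul, div_mul_div_comm]
  have key_add : ∀ a b : X.A, F (j ((a + b : X.A) : X.E)) = F (j (a : X.E)) + F (j (b : X.E)) := by
    intro a b
    obtain ⟨a1, b1, hb1, he1⟩ := hPj a a.2
    obtain ⟨a2, b2, hb2, he2⟩ := hPj b b.2
    have hbb : ψ (b1 * b2) ≠ 0 := by rw [map_mul]; exact mul_ne_zero hb1 hb2
    have hb1E := hcoe0 b1 hb1
    have hb2E := hcoe0 b2 hb2
    have h3 : j ((a + b : X.A) : X.E)
        = ((a1 * b2 + a2 * b1 : Y.A) : Y.E) / ((b1 * b2 : Y.A) : Y.E) := by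
      push_cast
      rw [map_add, he1, he2]
      field_simp
    rw [Fspec _ _ _ hbb h3, Fspec _ _ _ hb1 he1, Fspec _ _ _ hb2 he2,
      map_add, map_mul, map_mul, map_mul, div_add_div _ _ hb1 hb2,
      mul_comm (ψ b1) (ψ a2)]
  have key_alg : ∀ r : k, F (j ((algebraMap k X.A r : X.A) : X.E)) = algebraMap k Z.E r := by
    intro r
    have h2 : j ((algebraMap k X.A r : X.A) : X.E)
        = ((⟨algebraMap k Y.E r, Subalgebra.algebraMap_mem _ r⟩ : Y.A) : Y.E)
          / ((1 : Y.A) : Y.E) := by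
      rw [show ((algebraMap k X.A r : X.A) : X.E) = algebraMap k X.E r from rfl,
        AlgHom.commutes]
      simp
    rw [Fspec _ _ _ hone h2, map_one, div_one,
      show (⟨algebraMap k Y.E r, Subalgebra.algebraMap_mem _ r⟩ : Y.A) = algebraMap k Y.A r
        from rfl,
      AlgHom.commutes]
  refine ⟨{ toFun := fun a => F (j (a : X.E))
            map_one' := key_one
            map_mul' := key_mul
            map_zero' := key_zero
            map_add' := key_add
            commutes' := key_alg }, ?_, ?_⟩
  · -- equivariance
    intro g a
    obtain ⟨u, v, hv, hu⟩ := hPj a a.2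
    have hvg : ψ ⟨Y.act g v, Y.stable g v v.2⟩ ≠ 0 := by
      rw [hψeq g v]
      intro h
      exact hv ((Z.act g).injective (h.trans (map_zero (Z.act g)).symm))
    have heq : j (X.act g (a : X.E))
        = ((⟨Y.act g u, Y.stable g u u.2⟩ : Y.A) : Y.E)
          / ((⟨Y.act g v, Y.stable g v v.2⟩ : Y.A) : Y.E) := by
      rw [hj, hu]
      exact map_div₀ (Y.act g) _ _
    show F (j (X.act g (a : X.E))) = Z.act g (F (j (a : X.E)))
    rw [Fspec _ _ _ hvg heq, hψeq g u, hψeq g v, Fspec _ _ _ hv hu, map_div₀]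
  · -- non-vanishing at s₀
    refine ⟨s₀, hs₀S, ?_⟩
    show F (j s₀) ≠ 0
    rw [Fspec _ _ _ hψq (hnd s₀)]
    exact div_ne_zero hψnum hψq
end
end

section
/- For any finite group G over a characteristic-0 field k, every faithful linear G-variety (i.e., the affine space of a faithful linear representation of G) is a versal G-variety. -/
set_option synthInstance.maxHeartbeats 1000000
set_option maxHeartbeats 1000000


noncomputable section

variable {G : Type} [Group G]

/-- `X` is (a birational model of) the affine space `A(V)` of a faithful finite-dimensional
linear representation `V` of `G`: there is a finite-dimensional `G`-stable subspace `W ⊆ E`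
of linear coordinates (the dual of `V`) on which `G` acts faithfully, spanned by
algebraically independent elements, which generates the affine model `A`. -/
def GVar.IsFaithfulLinear {k : Type} [Field k] (X : GVar k G) : Prop :=
  ∃ W : Submodule k X.E,
    (∀ g : G, ∀ w ∈ W, X.act g w ∈ W) ∧
    (∀ g : G, (∀ w ∈ W, X.act g w = w) → g = 1) ∧
    X.A = Algebra.adjoin k (W : Set X.E) ∧
    ∃ s : Finset X.E, (s : Set X.E) ⊆ (W : Set X.E) ∧
      Submodule.span k (s : Set X.E) = W ∧
      AlgebraicIndependent k (fun x : (s : Set X.E) => (x : X.E))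

namespace VersalAux

open MvPolynomial

variable {k E : Type} [Field k] [Field E] [Algebra k E]
variable {G : Type} [Group G] [Fintype G]

theorem span_range_T (act : G →* (E ≃ₐ[k] E)) (hact : Function.Injective act)
    {ι : Type} [Fintype ι] [DecidableEq ι] (c : G → ι → ι → k)
    (hc1 : ∀ i j, c 1 i j = if i = j then 1 else 0) :
    Submodule.span E (Set.range (fun (u : ι → E) (i : ι) =>
      ∑ g : G, act g (∑ j, c g i j • u j))) = ⊤ := by
  classical
  set T : (ι → E) → ι → E := fun u i => ∑ g : G, act g (∑ j, c g i j • u j) with hT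
  by_contra h
  obtain ⟨f, hf0, hfmap⟩ :=
    Submodule.exists_dual_map_eq_bot_of_lt_top (lt_top_iff_ne_top.2 h) inferInstance
  -- f vanishes on all T u
  have hfT : ∀ u, f (T u) = 0 := by
    intro u
    have : f (T u) ∈ (Submodule.span E (Set.range T)).map f :=
      Submodule.mem_map_of_mem (Submodule.subset_span (Set.mem_range_self u))
    rw [hfmap] at this
    exact (Submodule.mem_bot E).mp this
  set lam : ι → E := fun i => f (fun j => if i = j then 1 else 0) with hlam
  have hfx : ∀ x : ι → E, f x = ∑ i, x i * lam i := by
    intro x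
    conv_lhs => rw [pi_eq_sum_univ x]
    rw [map_sum]
    refine Finset.sum_congr rfl fun i _ => ?_
    rw [map_smul, smul_eq_mul]
  -- the monoid homs
  set mh : G → (E →* E) := fun g => ((act g : E ≃+* E) : E →+* E).toMonoidHom with hmh
  have hmhinj : Function.Injective mh := by
    intro g g' hgg'
    apply hact
    ext x
    exact DFunLike.congr_fun hgg' x
  have li : LinearIndependent E (fun g : G => ⇑(mh g)) :=
    (linearIndependent_monoidHom E E).comp mh hmhinj
  -- coefficients
  have key : ∀ j₀ : ι, ∀ g : G, (∑ i, algebraMap k E (c g i j₀) * lam i) = 0 := by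
    intro j₀
    have claim : ∀ y : E, ∑ g : G, (∑ i, algebraMap k E (c g i j₀) * lam i) * act g y = 0 := by
      intro y
      set u : ι → E := fun j => if j = j₀ then y else 0 with hu
      have h1 := hfT u
      rw [hfx] at h1
      calc ∑ g : G, (∑ i, algebraMap k E (c g i j₀) * lam i) * act g y
          = ∑ g : G, ∑ i, (algebraMap k E (c g i j₀) * lam i) * act g y :=
            Finset.sum_congr rfl (fun g _ => Finset.sum_mul _ _ _)
        _ = ∑ i, ∑ g : G, (algebraMap k E (c g i j₀) * lam i) * act g y := Finset.sum_comm
        _ = ∑ i, T u i * lam i := Finset.sum_congr rfl (fun i _ => by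
            have hTui : T u i = ∑ g : G, act g (∑ j, c g i j • u j) := rfl
            rw [hTui, Finset.sum_mul]
            refine Finset.sum_congr rfl fun g _ => ?_
            have h2 : (∑ j, c g i j • u j) = c g i j₀ • y := by
              rw [Finset.sum_congr rfl (fun j _ => by
                rw [hu]; simp only []; rw [smul_ite, smul_zero] : ∀ j ∈ Finset.univ,
                  (c g i j • u j) = if j = j₀ then c g i j • y else 0)]
              simp
            rw [h2, Algebra.smul_def, map_mul, AlgEquiv.commutes]
            ring)
        _ = 0 := h1
    intro g
    have hsum : (∑ g : G, (∑ i, algebraMap k E (c g i j₀) * lam i) • ⇑(mh g)) = 0 := by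
      funext y
      rw [Finset.sum_apply]
      simp only [Pi.smul_apply, smul_eq_mul, Pi.zero_apply]
      exact claim y
    exact Fintype.linearIndependent_iff.1 li _ hsum g
  have hlam0 : ∀ j₀, lam j₀ = 0 := by
    intro j₀
    have := key j₀ 1
    rw [Finset.sum_congr rfl (fun i _ => by rw [hc1 i j₀] : ∀ i ∈ Finset.univ,
      algebraMap k E (c 1 i j₀) * lam i = algebraMap k E (if i = j₀ then 1 else 0) * lam i)] at this
    simpa using this
  apply hf0
  apply LinearMap.ext
  intro x
  rw [hfx]
  simp [hlam0]

theorem exists_eval_ne_zero_of_infinite_subfield (F : Subfield E) [Infinite F]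
    {κ : Type} (R : MvPolynomial κ E) (hR : R ≠ 0) :
    ∃ t : κ → F, MvPolynomial.eval (fun a => (t a : E)) R ≠ 0 := by
  classical
  let β := Module.Basis.ofVectorSpace F E
  obtain ⟨m, hm⟩ : ∃ m, R.coeff m ≠ 0 := by
    by_contra h; push_neg at h; exact hR (MvPolynomial.ext _ _ (by simpa using h))
  obtain ⟨b, hb⟩ : ∃ b, β.repr (R.coeff m) b ≠ 0 := by
    by_contra h; push_neg at h
    exact hm (by simpa using congrArg (β.repr.symm) (Finsupp.ext h : β.repr (R.coeff m) = 0))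
  set Rb : MvPolynomial κ F := ∑ m' ∈ R.support, monomial m' (β.repr (R.coeff m') b) with hRb
  have key : ∀ t : κ → F, β.repr (MvPolynomial.eval (fun a => (t a : E)) R) b
      = MvPolynomial.eval t Rb := by
    intro t
    rw [hRb, MvPolynomial.eval_eq, map_sum (MvPolynomial.eval t), map_sum β.repr,
      Finsupp.coe_finset_sum, Finset.sum_apply]
    refine Finset.sum_congr rfl fun m' _ => ?_
    have hcast : (∏ i ∈ m'.support, (fun a => (t a : E)) i ^ m' i)
        = ((∏ i ∈ m'.support, t i ^ m' i : F) : E) := by push_cast; rfl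
    rw [hcast, mul_comm]
    have hsm : ((∏ i ∈ m'.support, t i ^ m' i : F) : E) * R.coeff m'
        = (∏ i ∈ m'.support, t i ^ m' i : F) • R.coeff m' := by rw [Subfield.smul_def, smul_eq_mul]
    rw [hsm, map_smul, Finsupp.smul_apply, MvPolynomial.eval_monomial, smul_eq_mul, mul_comm,
      Finsupp.prod]
  have hRbne : Rb ≠ 0 := by
    intro h0
    apply hb
    have : Rb.coeff m = β.repr (R.coeff m) b := by
      rw [hRb, MvPolynomial.coeff_sum]
      rw [Finset.sum_congr rfl (fun m' _ => MvPolynomial.coeff_monomial m m' _)]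
      rw [Finset.sum_ite_eq' R.support m]
      simp [MvPolynomial.mem_support_iff.2 hm]
    rw [← this, h0]; simp
  by_contra h
  push_neg at h
  apply hRbne
  apply MvPolynomial.funext
  intro t
  rw [← key t, h t]
  simp

theorem exists_good_point [CharZero k] (act : G →* (E ≃ₐ[k] E)) (hact : Function.Injective act)
    {ι : Type} [Fintype ι] [DecidableEq ι] (c : G → ι → ι → k)
    (hc1 : ∀ i j, c 1 i j = if i = j then 1 else 0)
    (P : MvPolynomial ι k) (hP : P ≠ 0) :
    ∃ u : ι → E, MvPolynomial.aeval (fun i => ∑ g : G, act g (∑ j, c g i j • u j)) P ≠ 0 := by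
  classical
  haveI : CharZero E := charZero_of_injective_algebraMap (algebraMap k E).injective
  set T : (ι → E) → ι → E := fun u i => ∑ g : G, act g (∑ j, c g i j • u j) with hT
  -- the fixed subfield
  set F : Subfield E :=
    { carrier := {x | ∀ g : G, act g x = x}
      mul_mem' := fun hx hy g => by rw [map_mul, hx g, hy g]
      one_mem' := fun g => map_one _
      add_mem' := fun hx hy g => by rw [map_add, hx g, hy g]
      zero_mem' := fun g => map_zero _
      neg_mem' := fun hx g => by rw [map_neg, hx g]
      inv_mem' := fun x hx g => by rw [map_inv₀, hx g] } with hF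
  haveI : Infinite F := Infinite.of_injective
    (fun n : ℕ => (⟨(n : E), fun g => map_natCast _ n⟩ : F))
    (fun a b h => Nat.cast_injective (congrArg Subtype.val h))
  -- T is additive and F-linear
  have hTadd : ∀ u v, T (u + v) = T u + T v := by
    intro u v
    funext i
    simp only [hT, Pi.add_apply]
    rw [← Finset.sum_add_distrib]
    refine Finset.sum_congr rfl fun g _ => ?_
    rw [← map_add, ← Finset.sum_add_distrib]
    congr 1
    exact Finset.sum_congr rfl fun j _ => by rw [smul_add]
  have hTsmul : ∀ (a : F) (u : ι → E), T (fun i => (a : E) * u i) = fun i => (a : E) * T u i := by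
    intro a u
    funext i
    simp only [hT]
    rw [Finset.mul_sum]
    refine Finset.sum_congr rfl fun g _ => ?_
    have : (∑ j, c g i j • ((a : E) * u j)) = (a : E) * ∑ j, c g i j • u j := by
      rw [Finset.mul_sum]
      exact Finset.sum_congr rfl fun j _ => (mul_smul_comm _ _ _).symm
    rw [this, map_mul, a.2 g]
  -- a finite spanning family inside the range of T
  have hspan := span_range_T act hact c hc1
  obtain ⟨bs, hbsub, hbspan, hbli⟩ := exists_linearIndependent E (Set.range T)
  rw [hspan] at hbspan
  have hfin : bs.Finite := hbli.setFinite
  haveI : Fintype ↥bs := hfin.fintype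
  have hmem : ∀ v : bs, ∃ u, T u = (v : ι → E) := fun v => hbsub v.2
  choose uu huu using hmem
  -- the polynomial over E
  set P' : MvPolynomial ι E := MvPolynomial.map (algebraMap k E) P with hP'def
  have hP' : P' ≠ 0 := fun h0 =>
    hP (MvPolynomial.map_injective _ (algebraMap k E).injective
      (by rw [map_zero, ← hP'def]; exact h0))
  set R : MvPolynomial ↥bs E :=
    bind₁ (fun i => ∑ a : bs, MvPolynomial.C ((a : ι → E) i) * MvPolynomial.X a) P' with hRdef
  have evalR : ∀ x : ↥bs → E, eval x R = eval (fun i => ∑ a : bs, (a : ι → E) i * x a) P' := by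
    intro x
    rw [hRdef]
    have := aeval_bind₁ (R := E) (S := E) x
      (fun i => ∑ a : bs, MvPolynomial.C ((a : ι → E) i) * MvPolynomial.X a) P'
    have h2 : ∀ i, (aeval x) (∑ a : bs, MvPolynomial.C ((a : ι → E) i) * MvPolynomial.X a)
        = ∑ a : bs, (a : ι → E) i * x a := by
      intro i
      rw [map_sum]
      exact Finset.sum_congr rfl fun a _ => by rw [map_mul, aeval_C, aeval_X]; rfl
    calc eval x (bind₁ _ P') = aeval x (bind₁ (fun i => ∑ a : bs,
          MvPolynomial.C ((a : ι → E) i) * MvPolynomial.X a) P') := rfl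
      _ = aeval (fun i => (aeval x) (∑ a : bs, MvPolynomial.C ((a : ι → E) i)
            * MvPolynomial.X a)) P' := this
      _ = eval (fun i => ∑ a : bs, (a : ι → E) i * x a) P' := by
          rw [show (fun i => (aeval x) (∑ a : bs, MvPolynomial.C ((a : ι → E) i)
            * MvPolynomial.X a)) = fun i => ∑ a : bs, (a : ι → E) i * x a from funext h2]; rfl
  have hR : R ≠ 0 := by
    intro h0
    apply hP'
    apply MvPolynomial.funext (q := 0)
    intro y
    rw [map_zero]
    -- y is a linear combination of bs
    have hy : y ∈ Submodule.span E (Set.range (fun a : bs => (a : ι → E))) := by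
      rw [Subtype.range_coe, hbspan]; trivial
    obtain ⟨cf, hcf⟩ := (Submodule.mem_span_range_iff_exists_fun E).1 hy
    have := evalR cf
    rw [h0, map_zero] at this
    have heq : (fun i => ∑ a : bs, (a : ι → E) i * cf a) = y := by
      funext i
      rw [← congrFun hcf i]
      rw [Finset.sum_apply]
      exact Finset.sum_congr rfl fun a _ => by rw [Pi.smul_apply, smul_eq_mul, mul_comm]
    rw [heq] at this
    exact this.symm
  -- choose a point with coordinates in F
  obtain ⟨t, ht⟩ := exists_eval_ne_zero_of_infinite_subfield F R hR
  set u : ι → E := fun i => ∑ a : bs, (t a : E) * uu a i with hu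
  have hT0 : T 0 = 0 := by
    funext i; simp [hT]
  have hTsum : ∀ s : Finset ↥bs,
      T (fun i => ∑ a ∈ s, (t a : E) * uu a i) = fun i => ∑ a ∈ s, (t a : E) * T (uu a) i := by
    intro s
    induction s using Finset.induction_on with
    | empty => simp only [Finset.sum_empty]; exact hT0
    | insert a₀ s' hnotmem ih =>
      have hsplit : (fun i => ∑ a ∈ insert a₀ s', (t a : E) * uu a i)
          = (fun i => (t a₀ : E) * uu a₀ i) + (fun i => ∑ a ∈ s', (t a : E) * uu a i) := by
        funext i
        rw [Pi.add_apply, Finset.sum_insert hnotmem]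
      rw [hsplit, hTadd, hTsmul, ih]
      funext i
      rw [Pi.add_apply, Finset.sum_insert hnotmem]
  have hTu : T u = fun i => ∑ a : bs, (t a : E) * (a : ι → E) i := by
    rw [hu, hTsum Finset.univ]
    funext i
    exact Finset.sum_congr rfl fun a _ => by rw [huu]
  refine ⟨u, ?_⟩
  have haev : (MvPolynomial.aeval (T u)) P = eval (T u) P' := by
    rw [hP'def, MvPolynomial.aeval_def, MvPolynomial.eval₂_eq_eval_map]
  have : eval (T u) P' = eval (fun a : bs => (t a : E)) R := by
    rw [evalR, hTu]
    have hcomm : (fun i => ∑ a : bs, (t a : E) * (a : ι → E) i)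
        = fun i => ∑ a : bs, (a : ι → E) i * (t a : E) :=
      funext fun i => Finset.sum_congr rfl fun a _ => mul_comm _ _
    rw [hcomm]
  intro hzero
  apply ht
  rw [← this, ← haev]
  exact hzero

end VersalAux

/-- For any finite group `G` over a characteristic-zero field `k`, every faithful linear
`G`-variety (the affine space of a faithful linear representation of `G`) is a versal
`G`-variety. -/
theorem isVersal_of_faithfulLinear (k : Type) [Field k] [CharZero k]
    (G : Type) [Group G] [Finite G] (X : GVar k G)
    (hX : X.IsFaithfulLinear) :
    X.IsVersal := by
  classical
  obtain ⟨W, hWstab, hWfaith, hA, s, hsub, hspanW, hindep⟩ := hX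
  haveI : Fintype G := Fintype.ofFinite G
  have hfaith : X.Faithful := by
    intro g₁ g₂ hg
    have h1 : g₂⁻¹ * g₁ = 1 := by
      apply hWfaith
      intro w hw
      have e1 : X.act (g₂⁻¹ * g₁) w = X.act g₂⁻¹ (X.act g₁ w) := by
        rw [map_mul]; rfl
      rw [e1, hg]
      have e2 : X.act g₂⁻¹ (X.act g₂ w) = X.act (g₂⁻¹ * g₂) w := by
        rw [map_mul]; rfl
      rw [e2, inv_mul_cancel, map_one]
      rfl
    have := inv_mul_eq_one.mp h1
    exact this.symm
  refine ⟨hfaith, ?_⟩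
  intro S hSA hSstab hex Y hYf
  obtain ⟨s₀, hs₀S, hs₀⟩ := hex
  -- the index type of coordinates
  set ι : Type := ↥(s : Set X.E) with hι
  set w : ι → X.E := Subtype.val with hw
  have hrange : Set.range w = (s : Set X.E) := Subtype.range_coe
  have hAmem : ∀ {z : X.E}, z ∈ Algebra.adjoin k (W : Set X.E) → z ∈ X.A := by
    intro z hz; rw [hA]; exact hz
  have hWA : ∀ x ∈ W, x ∈ X.A := fun x hx => hAmem (Algebra.subset_adjoin hx)
  have hAs : X.A = Algebra.adjoin k (Set.range w) := by
    rw [hA, hrange, ← hspanW, Algebra.adjoin_span]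
  -- the basis of W
  set w' : ι → W := fun i => ⟨w i, hsub i.2⟩ with hw'
  have hli' : LinearIndependent k w' :=
    LinearIndependent.of_comp W.subtype hindep.linearIndependent
  have hsp' : ⊤ ≤ Submodule.span k (Set.range w') := by
    have hmap : Submodule.map W.subtype (Submodule.span k (Set.range w'))
        = Submodule.map W.subtype ⊤ := by
      rw [Submodule.map_span, Submodule.map_subtype_top, ← Set.range_comp]
      show Submodule.span k (Set.range w) = W
      rw [hrange, hspanW]
    exact (Submodule.map_injective_of_injective W.injective_subtype hmap).ge
  set b : Module.Basis ι k W := Module.Basis.mk hli' hsp' with hbdef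
  have hbw : ∀ i, (b i : X.E) = w i := fun i => by rw [hbdef, Module.Basis.mk_apply]
  -- the G-action on W
  set ρ : G → W →ₗ[k] W := fun g => (X.act g).toLinearMap.restrict (hWstab g) with hρ
  have hρval : ∀ g (x : W), (ρ g x : X.E) = X.act g (x : X.E) := fun g x => rfl
  have hρcomp : ∀ g h (x : W), ρ g (ρ h x) = ρ (g * h) x := by
    intro g h x
    apply Subtype.ext
    rw [hρval, hρval, hρval, map_mul]
    rfl
  have hρone : ∀ x : W, ρ 1 x = x := by
    intro x
    apply Subtype.ext
    rw [hρval, map_one]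
    rfl
  -- the coefficient matrices
  set c : G → ι → ι → k := fun g i j => b.equivFun (ρ g⁻¹ (b i)) j with hc
  have hc1 : ∀ i j, c 1 i j = if i = j then 1 else 0 := by
    intro i j
    rw [hc]
    simp only [inv_one, hρone]
    exact b.equivFun_self i j
  -- the polynomial corresponding to s₀
  set ee : X.A ≃ₐ[k] Algebra.adjoin k (Set.range w) := Subalgebra.equivOfEq _ _ hAs with hee
  have heeval : ∀ a : X.A, ((ee a : Algebra.adjoin k (Set.range w)) : X.E) = (a : X.E) :=
    fun a => rfl
  set P : MvPolynomial ι k := hindep.aevalEquiv.symm (ee ⟨s₀, hSA hs₀S⟩) with hPdef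
  have hP : P ≠ 0 := by
    intro h0
    apply hs₀
    have h1 := congrArg hindep.aevalEquiv h0
    rw [AlgEquiv.apply_symm_apply, map_zero] at h1
    have h2 := congrArg (Subtype.val) h1
    rw [heeval] at h2
    exact h2
  -- the good point
  obtain ⟨u, hgood⟩ := VersalAux.exists_good_point (E := Y.E) Y.act hYf c hc1 P hP
  set vals : ι → Y.E := fun i => ∑ g : G, Y.act g (∑ j, c g i j • u j) with hvals
  -- the algebra homomorphism
  set ψ : X.A →ₐ[k] Y.E := (MvPolynomial.aeval vals).comp
    ((hindep.aevalEquiv.symm.toAlgHom).comp ee.toAlgHom) with hψdef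
  have hψ : ∀ a : X.A, ψ a = MvPolynomial.aeval vals (hindep.aevalEquiv.symm (ee a)) :=
    fun a => rfl
  -- the equivariant linear map Φ on W
  set Φ : W →ₗ[k] Y.E :=
    ∑ g : G, ((Y.act g).toLinearMap.comp ((b.constr k u).comp (ρ g⁻¹))) with hΦ
  have hΦapp : ∀ x : W, Φ x = ∑ g : G, Y.act g ((b.constr k u) (ρ g⁻¹ x)) := by
    intro x
    rw [hΦ, LinearMap.sum_apply]
    rfl
  have hΦb : ∀ i, Φ (b i) = vals i := by
    intro i
    rw [hΦapp, hvals]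
    refine Finset.sum_congr rfl fun g _ => ?_
    rw [Module.Basis.constr_apply_fintype k b u (ρ g⁻¹ (b i))]
  have hΦequi : ∀ (h : G) (x : W), Φ (ρ h x) = Y.act h (Φ x) := by
    intro h x
    rw [hΦapp, hΦapp]
    rw [map_sum (Y.act h) (fun g => Y.act g ((b.constr k u) (ρ g⁻¹ x))) Finset.univ]
    refine Fintype.sum_equiv (Equiv.mulLeft h⁻¹) _ _ fun g => ?_
    rw [hρcomp g⁻¹ h x]
    have e0 : (Equiv.mulLeft h⁻¹) g = h⁻¹ * g := rfl
    rw [e0]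
    have e1 : (h⁻¹ * g)⁻¹ = g⁻¹ * h := by group
    rw [e1]
    have e2 : Y.act (h * (h⁻¹ * g)) ((b.constr k u) (ρ (g⁻¹ * h) x))
        = Y.act h (Y.act (h⁻¹ * g) ((b.constr k u) (ρ (g⁻¹ * h) x))) := by
      rw [map_mul]; rfl
    rw [show h * (h⁻¹ * g) = g from by group] at e2
    exact e2
  -- ψ restricted to W is Φ
  set L : W →ₗ[k] Y.E :=
    { toFun := fun x => ψ ⟨(x : X.E), hWA _ x.2⟩
      map_add' := fun x y => by
        rw [← map_add ψ]
        exact congrArg ψ (Subtype.ext rfl)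
      map_smul' := fun m x => by
        rw [RingHom.id_apply, ← map_smul ψ]
        exact congrArg ψ (Subtype.ext rfl) } with hL
  have hLapp : ∀ x : W, L x = ψ ⟨(x : X.E), hWA _ x.2⟩ := fun x => rfl
  have hLb : ∀ i, L (b i) = vals i := by
    intro i
    rw [hLapp]
    have h1 : (⟨((b i : W) : X.E), hWA _ (b i).2⟩ : X.A)
        = ⟨w i, hWA _ (hsub i.2)⟩ := Subtype.ext (hbw i)
    rw [h1, hψ]
    have h2 : ee ⟨w i, hWA _ (hsub i.2)⟩
        = ⟨w i, Algebra.subset_adjoin (Set.mem_range_self i)⟩ := Subtype.ext rfl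
    have h3 : hindep.aevalEquiv.symm ⟨w i, Algebra.subset_adjoin (Set.mem_range_self i)⟩
        = MvPolynomial.X i := by
      rw [AlgEquiv.symm_apply_eq]
      apply Subtype.ext
      have h4 := hindep.algebraMap_aevalEquiv (MvPolynomial.X i)
      have h5 : (hindep.aevalEquiv (MvPolynomial.X i) : X.E)
          = MvPolynomial.aeval w (MvPolynomial.X i) := h4
      rw [h5, MvPolynomial.aeval_X]
    rw [h2, h3, MvPolynomial.aeval_X]
  have hLΦ : L = Φ := b.ext fun i => by rw [hLb, hΦb]
  have hψW : ∀ (x : X.E) (hx : x ∈ W), ψ ⟨x, hWA x hx⟩ = Φ ⟨x, hx⟩ := by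
    intro x hx
    rw [← hLΦ, hLapp]
  -- equivariance of ψ
  have hequiv : ∀ (g : G) (x : X.E), x ∈ Algebra.adjoin k (W : Set X.E) →
      ∀ (hxA : x ∈ X.A) (hgA : X.act g x ∈ X.A),
      ψ ⟨X.act g x, hgA⟩ = Y.act g (ψ ⟨x, hxA⟩) := by
    intro g x hx
    induction hx using Algebra.adjoin_induction with
    | mem z hz =>
      intro hxA hgA
      have e1 : (⟨X.act g z, hgA⟩ : X.A) = ⟨X.act g z, hWA _ (hWstab g z hz)⟩ := rfl
      have e2 : (⟨z, hxA⟩ : X.A) = ⟨z, hWA _ hz⟩ := rfl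
      rw [e1, e2, hψW _ (hWstab g z hz), hψW _ hz]
      have e3 : (⟨X.act g z, hWstab g z hz⟩ : W) = ρ g ⟨z, hz⟩ := rfl
      rw [e3, hΦequi]
    | algebraMap r =>
      intro hxA hgA
      have e1 : X.act g ((algebraMap k X.E) r) = (algebraMap k X.E) r := AlgEquiv.commutes _ r
      have e2 : (⟨X.act g ((algebraMap k X.E) r), hgA⟩ : X.A) = algebraMap k X.A r :=
        Subtype.ext e1
      have e3 : (⟨(algebraMap k X.E) r, hxA⟩ : X.A) = algebraMap k X.A r := Subtype.ext rfl
      rw [e2, e3, AlgHom.commutes, AlgEquiv.commutes]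
    | add z₁ z₂ h₁ h₂ ih₁ ih₂ =>
      intro hxA hgA
      have hz₁ : z₁ ∈ X.A := hAmem h₁
      have hz₂ : z₂ ∈ X.A := hAmem h₂
      have e1 : (⟨X.act g (z₁ + z₂), hgA⟩ : X.A)
          = ⟨X.act g z₁, X.stable g z₁ hz₁⟩ + ⟨X.act g z₂, X.stable g z₂ hz₂⟩ :=
        Subtype.ext (map_add _ _ _)
      have e2 : (⟨z₁ + z₂, hxA⟩ : X.A) = ⟨z₁, hz₁⟩ + ⟨z₂, hz₂⟩ := Subtype.ext rfl
      rw [e1, e2, map_add, map_add, ih₁ hz₁ (X.stable g z₁ hz₁), ih₂ hz₂ (X.stable g z₂ hz₂),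
        map_add]
    | mul z₁ z₂ h₁ h₂ ih₁ ih₂ =>
      intro hxA hgA
      have hz₁ : z₁ ∈ X.A := hAmem h₁
      have hz₂ : z₂ ∈ X.A := hAmem h₂
      have e1 : (⟨X.act g (z₁ * z₂), hgA⟩ : X.A)
          = ⟨X.act g z₁, X.stable g z₁ hz₁⟩ * ⟨X.act g z₂, X.stable g z₂ hz₂⟩ :=
        Subtype.ext (map_mul _ _ _)
      have e2 : (⟨z₁ * z₂, hxA⟩ : X.A) = ⟨z₁, hz₁⟩ * ⟨z₂, hz₂⟩ := Subtype.ext rfl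
      rw [e1, e2, map_mul, map_mul, ih₁ hz₁ (X.stable g z₁ hz₁), ih₂ hz₂ (X.stable g z₂ hz₂),
        map_mul]
  refine ⟨ψ, ?_, s₀, hs₀S, ?_⟩
  · intro g a
    obtain ⟨x, hx⟩ := a
    have ha : x ∈ Algebra.adjoin k (W : Set X.E) := by
      rw [← hA]; exact hx
    exact hequiv g x ha hx (X.stable g x hx)
  · exact hgood
end
end
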